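/- arXiv:1905.01893 — 4 statements merged into one kernel-verified Lean document; each statement's English description precedes it below -/
import Mathlib

section
/- Let {t_k} be a sequence of positive relaxation parameters converging to zero, and for each k let x_k be a KKT point of the relaxed problem P(φ_FB^{t_k}). Suppose the sequence {x_k} converges to a point x̄ ∈ X at which MPOC-MFCQ holds. Then x̄ is a W-stationary point of (MPOC). -/
noncomputable section

open Filter Topology

/-- The Fischer–Burmeister NCP-function. -/
def phiFB (v : ℝ × ℝ) : ℝ := v.1 + v.2 - Real.sqrt (v.1 ^ 2 + v.2 ^ 2)

/-- The Kanzow–Schwartz NCP-function. -/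
def phiKS (v : ℝ × ℝ) : ℝ :=
  if 0 ≤ v.1 + v.2 then v.1 * v.2 else -(v.1 ^ 2 + v.2 ^ 2) / 2

/-- The smoothed Fischer–Burmeister function. -/
def phiFBt (t : ℝ) (v : ℝ × ℝ) : ℝ :=
  v.1 + v.2 - Real.sqrt (v.1 ^ 2 + v.2 ^ 2 + 2 * t)

/-- The offset Kanzow–Schwartz function. -/
def phiKSt (t : ℝ) (v : ℝ × ℝ) : ℝ := phiKS v - t

variable {n m p q : ℕ}

/-- The feasible set `X` of (MPOC). -/
def feasMPOC (g : Fin m → (Fin n → ℝ) → ℝ) (h : Fin p → (Fin n → ℝ) → ℝ)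
    (G H : Fin q → (Fin n → ℝ) → ℝ) : Set (Fin n → ℝ) :=
  {x | (∀ i, g i x ≤ 0) ∧ (∀ j, h j x = 0) ∧ ∀ l, G l x ≤ 0 ∨ H l x ≤ 0}

/-- The feasible set `X(φ^t)` of the relaxed problem P(φ^t). -/
def relFeas (g : Fin m → (Fin n → ℝ) → ℝ) (h : Fin p → (Fin n → ℝ) → ℝ)
    (G H : Fin q → (Fin n → ℝ) → ℝ) (phit : ℝ → ℝ × ℝ → ℝ) (t : ℝ) :
    Set (Fin n → ℝ) :=
  {x | (∀ i, g i x ≤ 0) ∧ (∀ j, h j x = 0) ∧ ∀ l, phit t (G l x, H l x) ≤ 0}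

/-- The feasible set of the complementarity-constrained surrogate (CC-MPOC). -/
def feasCC (g : Fin m → (Fin n → ℝ) → ℝ) (h : Fin p → (Fin n → ℝ) → ℝ)
    (G H : Fin q → (Fin n → ℝ) → ℝ) :
    Set ((Fin n → ℝ) × (Fin q → ℝ) × (Fin q → ℝ)) :=
  {w | (∀ i, g i w.1 ≤ 0) ∧ (∀ j, h j w.1 = 0) ∧ (∀ l, G l w.1 - w.2.1 l ≤ 0) ∧
       (∀ l, H l w.1 - w.2.2 l ≤ 0) ∧ (∀ l, 0 ≤ w.2.1 l) ∧ (∀ l, 0 ≤ w.2.2 l) ∧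
       ∀ l, w.2.1 l * w.2.2 l = 0}

/-- W-stationarity for (MPOC): multipliers are supported on the respective active sets
(`I^g(x)` for `lam`, `I^{0+}(x) ∪ I^{00}(x)` for `mu`, `I^{+0}(x) ∪ I^{00}(x)` for `nu`). -/
def WStat (f : (Fin n → ℝ) → ℝ) (g : Fin m → (Fin n → ℝ) → ℝ)
    (h : Fin p → (Fin n → ℝ) → ℝ) (G H : Fin q → (Fin n → ℝ) → ℝ)
    (x : Fin n → ℝ) : Prop :=
  ∃ (lam : Fin m → ℝ) (rho : Fin p → ℝ) (mu nu : Fin q → ℝ),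
    (∀ i, 0 ≤ lam i) ∧ (∀ i, g i x ≠ 0 → lam i = 0) ∧
    (∀ l, 0 ≤ mu l) ∧ (∀ l, ¬(G l x = 0 ∧ 0 ≤ H l x) → mu l = 0) ∧
    (∀ l, 0 ≤ nu l) ∧ (∀ l, ¬(H l x = 0 ∧ 0 ≤ G l x) → nu l = 0) ∧
    fderiv ℝ f x + (∑ i, lam i • fderiv ℝ (g i) x) + (∑ j, rho j • fderiv ℝ (h j) x)
      + (∑ l, mu l • fderiv ℝ (G l) x) + (∑ l, nu l • fderiv ℝ (H l) x) = 0

/-- M-stationarity for (MPOC). -/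
def MStat (f : (Fin n → ℝ) → ℝ) (g : Fin m → (Fin n → ℝ) → ℝ)
    (h : Fin p → (Fin n → ℝ) → ℝ) (G H : Fin q → (Fin n → ℝ) → ℝ)
    (x : Fin n → ℝ) : Prop :=
  ∃ (lam : Fin m → ℝ) (rho : Fin p → ℝ) (mu nu : Fin q → ℝ),
    (∀ i, 0 ≤ lam i) ∧ (∀ i, g i x ≠ 0 → lam i = 0) ∧
    (∀ l, 0 ≤ mu l) ∧ (∀ l, ¬(G l x = 0 ∧ 0 ≤ H l x) → mu l = 0) ∧
    (∀ l, 0 ≤ nu l) ∧ (∀ l, ¬(H l x = 0 ∧ 0 ≤ G l x) → nu l = 0) ∧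
    (∀ l, G l x = 0 → H l x = 0 → mu l * nu l = 0) ∧
    fderiv ℝ f x + (∑ i, lam i • fderiv ℝ (g i) x) + (∑ j, rho j • fderiv ℝ (h j) x)
      + (∑ l, mu l • fderiv ℝ (G l) x) + (∑ l, nu l • fderiv ℝ (H l) x) = 0

/-- S-stationarity for (MPOC). -/
def SStat (f : (Fin n → ℝ) → ℝ) (g : Fin m → (Fin n → ℝ) → ℝ)
    (h : Fin p → (Fin n → ℝ) → ℝ) (G H : Fin q → (Fin n → ℝ) → ℝ)
    (x : Fin n → ℝ) : Prop :=
  ∃ (lam : Fin m → ℝ) (rho : Fin p → ℝ) (mu nu : Fin q → ℝ),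
    (∀ i, 0 ≤ lam i) ∧ (∀ i, g i x ≠ 0 → lam i = 0) ∧
    (∀ l, 0 ≤ mu l) ∧ (∀ l, ¬(G l x = 0 ∧ 0 ≤ H l x) → mu l = 0) ∧
    (∀ l, 0 ≤ nu l) ∧ (∀ l, ¬(H l x = 0 ∧ 0 ≤ G l x) → nu l = 0) ∧
    (∀ l, G l x = 0 → H l x = 0 → mu l = 0 ∧ nu l = 0) ∧
    fderiv ℝ f x + (∑ i, lam i • fderiv ℝ (g i) x) + (∑ j, rho j • fderiv ℝ (h j) x)
      + (∑ l, mu l • fderiv ℝ (G l) x) + (∑ l, nu l • fderiv ℝ (H l) x) = 0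

/-- MPOC-MFCQ at `x`: positive-linear independence of the active gradients. -/
def MPOC_MFCQ (g : Fin m → (Fin n → ℝ) → ℝ) (h : Fin p → (Fin n → ℝ) → ℝ)
    (G H : Fin q → (Fin n → ℝ) → ℝ) (x : Fin n → ℝ) : Prop :=
  ∀ (lam : Fin m → ℝ) (rho : Fin p → ℝ) (mu nu : Fin q → ℝ),
    (∀ i, 0 ≤ lam i) → (∀ i, g i x ≠ 0 → lam i = 0) →
    (∀ l, 0 ≤ mu l) → (∀ l, ¬(G l x = 0 ∧ 0 ≤ H l x) → mu l = 0) →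
    (∀ l, 0 ≤ nu l) → (∀ l, ¬(H l x = 0 ∧ 0 ≤ G l x) → nu l = 0) →
    ((∑ i, lam i • fderiv ℝ (g i) x) + (∑ j, rho j • fderiv ℝ (h j) x)
      + (∑ l, mu l • fderiv ℝ (G l) x) + (∑ l, nu l • fderiv ℝ (H l) x) = 0) →
    (∀ i, lam i = 0) ∧ (∀ j, rho j = 0) ∧ (∀ l, mu l = 0) ∧ (∀ l, nu l = 0)

/-- MPOC-LICQ at `x`: linear independence of the active gradients. -/
def MPOC_LICQ (g : Fin m → (Fin n → ℝ) → ℝ) (h : Fin p → (Fin n → ℝ) → ℝ)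
    (G H : Fin q → (Fin n → ℝ) → ℝ) (x : Fin n → ℝ) : Prop :=
  ∀ (lam : Fin m → ℝ) (rho : Fin p → ℝ) (mu nu : Fin q → ℝ),
    (∀ i, g i x ≠ 0 → lam i = 0) →
    (∀ l, ¬(G l x = 0 ∧ 0 ≤ H l x) → mu l = 0) →
    (∀ l, ¬(H l x = 0 ∧ 0 ≤ G l x) → nu l = 0) →
    ((∑ i, lam i • fderiv ℝ (g i) x) + (∑ j, rho j • fderiv ℝ (h j) x)
      + (∑ l, mu l • fderiv ℝ (G l) x) + (∑ l, nu l • fderiv ℝ (H l) x) = 0) →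
    (∀ i, lam i = 0) ∧ (∀ j, rho j = 0) ∧ (∀ l, mu l = 0) ∧ (∀ l, nu l = 0)

/-- Generic first-order (KKT-type) system for the NCP-reformulation of (MPOC): multipliers
`xi l ≥ 0` supported on the active set `𝓘(x)`, with subgradient coefficients
`(alpha l, beta l)` equal to `(1,0)` on `I^{0+}(x)`, `(0,1)` on `I^{+0}(x)`, and satisfying
`extraI00` on the biactive set `I^{00}(x)`. -/
def KKTGen (f : (Fin n → ℝ) → ℝ) (g : Fin m → (Fin n → ℝ) → ℝ)
    (h : Fin p → (Fin n → ℝ) → ℝ) (G H : Fin q → (Fin n → ℝ) → ℝ)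
    (x : Fin n → ℝ) (extraI00 : ℝ → ℝ → Prop) : Prop :=
  ∃ (lam : Fin m → ℝ) (rho : Fin p → ℝ) (xi alpha beta : Fin q → ℝ),
    (∀ i, 0 ≤ lam i) ∧ (∀ i, g i x ≠ 0 → lam i = 0) ∧
    (∀ l, 0 ≤ xi l) ∧
    (∀ l, ¬((G l x = 0 ∧ 0 ≤ H l x) ∨ (H l x = 0 ∧ 0 ≤ G l x)) → xi l = 0) ∧
    (∀ l, G l x = 0 → 0 < H l x → alpha l = 1 ∧ beta l = 0) ∧
    (∀ l, 0 < G l x → H l x = 0 → alpha l = 0 ∧ beta l = 1) ∧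
    (∀ l, G l x = 0 → H l x = 0 → extraI00 (alpha l) (beta l)) ∧
    fderiv ℝ f x + (∑ i, lam i • fderiv ℝ (g i) x) + (∑ j, rho j • fderiv ℝ (h j) x)
      + (∑ l, xi l • (alpha l • fderiv ℝ (G l) x + beta l • fderiv ℝ (H l) x)) = 0

/-- Stationarity (of W-type, refined by `extra` on the biactive set `I^{GH}`) for the
switching-constrained surrogate (SC-MPOC), after elimination of the multipliers of the
sign constraints on the slack variables. -/
def StatSC (f : (Fin n → ℝ) → ℝ) (g : Fin m → (Fin n → ℝ) → ℝ)
    (h : Fin p → (Fin n → ℝ) → ℝ) (G H : Fin q → (Fin n → ℝ) → ℝ)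
    (x : Fin n → ℝ) (y z : Fin q → ℝ) (extra : ℝ → ℝ → Prop) : Prop :=
  ∃ (lam : Fin m → ℝ) (rho : Fin p → ℝ) (muT nuT : Fin q → ℝ),
    (∀ i, 0 ≤ lam i) ∧ (∀ i, g i x ≠ 0 → lam i = 0) ∧
    (∀ l, 0 ≤ muT l) ∧ (∀ l, G l x ≠ y l → muT l = 0) ∧ (∀ l, muT l * y l = 0) ∧
    (∀ l, 0 ≤ nuT l) ∧ (∀ l, H l x ≠ z l → nuT l = 0) ∧ (∀ l, nuT l * z l = 0) ∧
    (∀ l, G l x = y l → H l x = z l → extra (muT l) (nuT l)) ∧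
    fderiv ℝ f x + (∑ i, lam i • fderiv ℝ (g i) x) + (∑ j, rho j • fderiv ℝ (h j) x)
      + (∑ l, muT l • fderiv ℝ (G l) x) + (∑ l, nuT l • fderiv ℝ (H l) x) = 0

/-- Stationarity (of W-type, refined by `extra` on the biactive set `I^{00}_CC`) for the
complementarity-constrained surrogate (CC-MPOC). -/
def StatCC (f : (Fin n → ℝ) → ℝ) (g : Fin m → (Fin n → ℝ) → ℝ)
    (h : Fin p → (Fin n → ℝ) → ℝ) (G H : Fin q → (Fin n → ℝ) → ℝ)
    (x : Fin n → ℝ) (y z : Fin q → ℝ) (extra : ℝ → ℝ → Prop) : Prop :=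
  ∃ (lam : Fin m → ℝ) (rho : Fin p → ℝ) (eta theta mubar nubar : Fin q → ℝ),
    (∀ i, 0 ≤ lam i) ∧ (∀ i, g i x ≠ 0 → lam i = 0) ∧
    (∀ l, 0 ≤ eta l) ∧ (∀ l, eta l * (G l x - y l) = 0) ∧
    (∀ l, 0 ≤ theta l) ∧ (∀ l, theta l * (H l x - z l) = 0) ∧
    (fderiv ℝ f x + (∑ i, lam i • fderiv ℝ (g i) x) + (∑ j, rho j • fderiv ℝ (h j) x)
      + (∑ l, eta l • fderiv ℝ (G l) x) + (∑ l, theta l • fderiv ℝ (H l) x) = 0) ∧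
    (∀ l, y l = 0 → eta l + mubar l = 0) ∧
    (∀ l, 0 < y l → z l = 0 → eta l = 0) ∧
    (∀ l, z l = 0 → theta l + nubar l = 0) ∧
    (∀ l, y l = 0 → 0 < z l → theta l = 0) ∧
    (∀ l, y l = 0 → z l = 0 → extra (mubar l) (nubar l))

lemma sqrtpos' {a b t : ℝ} (ht : 0 < t) : 0 < Real.sqrt (a^2+b^2+2*t) :=
  Real.sqrt_pos.2 (by positivity)

lemma le_sqrt'' {a b t : ℝ} (ht : 0 < t) : a ≤ Real.sqrt (a^2+b^2+2*t) := by
  have h0 : (0:ℝ) ≤ a^2+b^2+2*t := by positivity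
  have h1 := Real.sq_sqrt h0
  have h2 := Real.sqrt_nonneg (a^2+b^2+2*t)
  nlinarith [sq_nonneg (Real.sqrt (a^2+b^2+2*t) - a), sq_nonneg b]

lemma coeff_nonneg' {a b t : ℝ} (ht : 0 < t) :
    0 ≤ 1 - a / Real.sqrt (a^2+b^2+2*t) := by
  have hS := sqrtpos' (a := a) (b := b) ht
  rw [sub_nonneg, div_le_one hS]
  exact le_sqrt'' ht

lemma coeff_nonneg2 {a b t : ℝ} (ht : 0 < t) :
    0 ≤ 1 - b / Real.sqrt (a^2+b^2+2*t) := by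
  rw [show a^2+b^2+2*t = b^2+a^2+2*t by ring]
  exact coeff_nonneg' ht

lemma active_pos' {a b t : ℝ} (ht : 0 < t) (hphi : a + b - Real.sqrt (a^2+b^2+2*t) = 0) :
    0 < a ∧ 0 < b ∧ Real.sqrt (a^2+b^2+2*t) = a + b := by
  have h0 : (0:ℝ) ≤ a^2+b^2+2*t := by positivity
  have h1 := Real.sq_sqrt h0
  have hS := sqrtpos' (a := a) (b := b) ht
  have hsum : a + b = Real.sqrt (a^2+b^2+2*t) := by linarith
  have hab : a * b = t := by nlinarith [hsum]
  exact ⟨by nlinarith, by nlinarith, by linarith⟩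

lemma inv_aux2 (r : ℝ) (hr : 0 ≤ r) : (1+r)⁻¹ * r = 1-(1+r)⁻¹ := by
  have hne : (1:ℝ)+r ≠ 0 := by positivity
  field_simp
  ring

lemma lim_eventually_zero {u : ℕ → ℝ} {L : ℝ} (hu : Tendsto u atTop (𝓝 L))
    (hz : ∀ᶠ j in atTop, u j = 0) : L = 0 :=
  tendsto_nhds_unique (hu.congr' (hz.mono fun _ hj => hj)) tendsto_const_nhds

set_option maxHeartbeats 2000000 in
/-- Convergence of the Scholtes-type relaxation scheme based on the smoothed
Fischer–Burmeister function: limits of KKT points of P(φ_FB^{t_k}) are W-stationary for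
(MPOC) under MPOC-MFCQ. -/
theorem convergence_smoothedFB {n m p q : ℕ} (f : (Fin n → ℝ) → ℝ)
    (g : Fin m → (Fin n → ℝ) → ℝ) (h : Fin p → (Fin n → ℝ) → ℝ)
    (G H : Fin q → (Fin n → ℝ) → ℝ)
    (hf : ContDiff ℝ 1 f) (hg : ∀ i, ContDiff ℝ 1 (g i)) (hh : ∀ j, ContDiff ℝ 1 (h j))
    (hG : ∀ l, ContDiff ℝ 1 (G l)) (hH : ∀ l, ContDiff ℝ 1 (H l))
    (t : ℕ → ℝ) (ht : ∀ k, 0 < t k) (htlim : Filter.Tendsto t Filter.atTop (nhds 0))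
    (x : ℕ → Fin n → ℝ)
    (hkkt : ∀ k, x k ∈ relFeas g h G H phiFBt (t k) ∧
      ∃ (lam : Fin m → ℝ) (rho : Fin p → ℝ) (xi : Fin q → ℝ),
        (∀ i, 0 ≤ lam i) ∧ (∀ i, g i (x k) ≠ 0 → lam i = 0) ∧
        (∀ l, 0 ≤ xi l) ∧ (∀ l, phiFBt (t k) (G l (x k), H l (x k)) ≠ 0 → xi l = 0) ∧
        fderiv ℝ f (x k) + (∑ i, lam i • fderiv ℝ (g i) (x k))
          + (∑ j, rho j • fderiv ℝ (h j) (x k))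
          + (∑ l, xi l •
            ((1 - G l (x k) / Real.sqrt ((G l (x k)) ^ 2 + (H l (x k)) ^ 2 + 2 * t k)) •
                fderiv ℝ (G l) (x k)
              + (1 - H l (x k) / Real.sqrt ((G l (x k)) ^ 2 + (H l (x k)) ^ 2 + 2 * t k)) •
                fderiv ℝ (H l) (x k))) = 0)
    (xb : Fin n → ℝ) (hconv : Filter.Tendsto x Filter.atTop (nhds xb))
    (hxb : xb ∈ feasMPOC g h G H) (hmfcq : MPOC_MFCQ g h G H xb) :
    WStat f g h G H xb := by
  
  classical
  obtain ⟨hgx, hhx, hGHx⟩ := hxb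
  choose feas lam rho xi hlam0 hlamsupp hxi0 hxisupp hstat using hkkt
  set mu : ℕ → Fin q → ℝ := fun k l =>
    xi k l * (1 - G l (x k) / Real.sqrt ((G l (x k)) ^ 2 + (H l (x k)) ^ 2 + 2 * t k)) with hmu
  set nu : ℕ → Fin q → ℝ := fun k l =>
    xi k l * (1 - H l (x k) / Real.sqrt ((G l (x k)) ^ 2 + (H l (x k)) ^ 2 + 2 * t k)) with hnu
  -- basic facts about mu, nu
  have hmu0 : ∀ k l, 0 ≤ mu k l := by
    intro k l
    simp only [hmu]
    exact mul_nonneg (hxi0 k l) (coeff_nonneg' (ht k))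
  have hnu0 : ∀ k l, 0 ≤ nu k l := by
    intro k l
    simp only [hnu]
    exact mul_nonneg (hxi0 k l) (coeff_nonneg2 (ht k))
  have hxipos : ∀ k l, xi k l ≠ 0 → 0 < G l (x k) ∧ 0 < H l (x k) ∧
      Real.sqrt ((G l (x k)) ^ 2 + (H l (x k)) ^ 2 + 2 * t k) = G l (x k) + H l (x k) := by
    intro k l hne
    have hphi : phiFBt (t k) (G l (x k), H l (x k)) = 0 := by
      by_contra hc; exact hne (hxisupp k l hc)
    exact active_pos' (ht k) hphi
  have hmuz : ∀ k l, ¬(0 < G l (x k) ∧ 0 < H l (x k)) → mu k l = 0 ∧ nu k l = 0 := by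
    intro k l hc
    have hxz : xi k l = 0 := by
      by_contra hne
      exact hc ⟨(hxipos k l hne).1, (hxipos k l hne).2.1⟩
    simp [hmu, hnu, hxz]
  have hid : ∀ k l, mu k l * G l (x k) = nu k l * H l (x k) := by
    intro k l
    by_cases hxz : xi k l = 0
    · simp [hmu, hnu, hxz]
    · obtain ⟨hGp, hHp, hSeq⟩ := hxipos k l hxz
      have hSne : G l (x k) + H l (x k) ≠ 0 := by positivity
      simp only [hmu, hnu, hSeq]
      field_simp [hSne]
      ring
  -- stationarity in mu/nu form
  have hstat' : ∀ k, fderiv ℝ f (x k) + (∑ i, lam k i • fderiv ℝ (g i) (x k))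
      + (∑ j, rho k j • fderiv ℝ (h j) (x k)) + (∑ l, mu k l • fderiv ℝ (G l) (x k))
      + (∑ l, nu k l • fderiv ℝ (H l) (x k)) = 0 := by
    intro k
    have h5 := hstat k
    simp only [smul_add, smul_smul, Finset.sum_add_distrib, ← add_assoc] at h5
    simp only [hmu, hnu]
    exact h5
  -- normalization
  set c : ℕ → (Fin m → ℝ) × (Fin p → ℝ) × (Fin q → ℝ) × (Fin q → ℝ) :=
    fun k => (lam k, rho k, mu k, nu k) with hc
  set s : ℕ → ℝ := fun k => (1 + ‖c k‖)⁻¹ with hsdef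
  have hNpos : ∀ k, (0:ℝ) < 1 + ‖c k‖ := fun k => by positivity
  have hspos : ∀ k, 0 < s k := by
    intro k
    simp only [hsdef]
    exact inv_pos.2 (hNpos k)
  have hsle : ∀ k, s k ≤ 1 := by
    intro k
    simp only [hsdef]
    rw [inv_le_one_iff₀]
    right; linarith [norm_nonneg (c k)]
  have hnormd : ∀ k, ‖s k • c k‖ = 1 - s k := by
    intro k
    rw [norm_smul, Real.norm_eq_abs, abs_of_pos (hspos k)]
    simp only [hsdef]
    exact inv_aux2 _ (norm_nonneg _)
  have hwball : ∀ k, ((s k, s k • c k) :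
      ℝ × ((Fin m → ℝ) × (Fin p → ℝ) × (Fin q → ℝ) × (Fin q → ℝ))) ∈
      Metric.closedBall (0 : ℝ × ((Fin m → ℝ) × (Fin p → ℝ) × (Fin q → ℝ) × (Fin q → ℝ))) 1 := by
    intro k
    rw [mem_closedBall_zero_iff, Prod.norm_def]
    apply max_le
    · rw [Real.norm_eq_abs, abs_of_pos (hspos k)]; exact hsle k
    · rw [hnormd k]; linarith [(hspos k).le]
  obtain ⟨wb, -, φ, hφ, hwconv⟩ :=
    (isCompact_closedBall (0 : ℝ × ((Fin m → ℝ) × (Fin p → ℝ) × (Fin q → ℝ) × (Fin q → ℝ))) 1).tendsto_subseq hwball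
  have hxφ : Tendsto (fun j => x (φ j)) atTop (𝓝 xb) := hconv.comp hφ.tendsto_atTop
  -- component convergences
  have hsc : Tendsto (fun j => s (φ j)) atTop (𝓝 wb.1) := by
    have := (continuous_fst.tendsto wb).comp hwconv
    simpa [Function.comp_def] using this
  have hdc : Tendsto (fun j => s (φ j) • c (φ j)) atTop (𝓝 wb.2) := by
    have := (continuous_snd.tendsto wb).comp hwconv
    simpa [Function.comp_def] using this
  set sb := wb.1 with hsb
  set lamb := wb.2.1 with hlamb
  set rhob := wb.2.2.1 with hrhob
  set mub := wb.2.2.2.1 with hmubdef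
  set nub := wb.2.2.2.2 with hnubdef
  have hlamc : ∀ i, Tendsto (fun j => s (φ j) * lam (φ j) i) atTop (𝓝 (lamb i)) := by
    intro i
    have := ((continuous_apply i).tendsto wb.2.1).comp ((continuous_fst.tendsto wb.2).comp hdc)
    simpa [Function.comp_def, hc] using this
  have hrhoc : ∀ j', Tendsto (fun j => s (φ j) * rho (φ j) j') atTop (𝓝 (rhob j')) := by
    intro i
    have := ((continuous_apply i).tendsto wb.2.2.1).comp
      ((continuous_fst.tendsto wb.2.2).comp ((continuous_snd.tendsto wb.2).comp hdc))
    simpa [Function.comp_def, hc] using this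
  have hmuc : ∀ l, Tendsto (fun j => s (φ j) * mu (φ j) l) atTop (𝓝 (mub l)) := by
    intro i
    have := ((continuous_apply i).tendsto wb.2.2.2.1).comp
      ((continuous_fst.tendsto wb.2.2.2).comp ((continuous_snd.tendsto wb.2.2).comp
        ((continuous_snd.tendsto wb.2).comp hdc)))
    simpa [Function.comp_def, hc] using this
  have hnuc : ∀ l, Tendsto (fun j => s (φ j) * nu (φ j) l) atTop (𝓝 (nub l)) := by
    intro i
    have := ((continuous_apply i).tendsto wb.2.2.2.2).comp
      ((continuous_snd.tendsto wb.2.2.2).comp ((continuous_snd.tendsto wb.2.2).comp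
        ((continuous_snd.tendsto wb.2).comp hdc)))
    simpa [Function.comp_def, hc] using this
  -- sign conditions in the limit
  have hsbnn : 0 ≤ sb := ge_of_tendsto' hsc fun j => (hspos (φ j)).le
  have hlambnn : ∀ i, 0 ≤ lamb i := fun i =>
    ge_of_tendsto' (hlamc i) fun j => mul_nonneg (hspos (φ j)).le (hlam0 (φ j) i)
  have hmubnn : ∀ l, 0 ≤ mub l := fun l =>
    ge_of_tendsto' (hmuc l) fun j => mul_nonneg (hspos (φ j)).le (hmu0 (φ j) l)
  have hnubnn : ∀ l, 0 ≤ nub l := fun l =>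
    ge_of_tendsto' (hnuc l) fun j => mul_nonneg (hspos (φ j)).le (hnu0 (φ j) l)
  -- support condition for lamb
  have hlambsupp : ∀ i, g i xb ≠ 0 → lamb i = 0 := by
    intro i hne
    have hlt : g i xb < 0 := lt_of_le_of_ne (hgx i) hne
    have hev : ∀ᶠ j in atTop, g i (x (φ j)) < 0 :=
      (((hg i).continuous.tendsto xb).comp hxφ).eventually_lt_const hlt
    exact lim_eventually_zero (hlamc i)
      (hev.mono fun j hj => by rw [hlamsupp (φ j) i (ne_of_lt hj), mul_zero])
  -- limit of the key identity
  have hidlim : ∀ l, mub l * G l xb = nub l * H l xb := by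
    intro l
    have hGt : Tendsto (fun j => G l (x (φ j))) atTop (𝓝 (G l xb)) :=
      ((hG l).continuous.tendsto xb).comp hxφ
    have hHt : Tendsto (fun j => H l (x (φ j))) atTop (𝓝 (H l xb)) :=
      ((hH l).continuous.tendsto xb).comp hxφ
    have h1 : Tendsto (fun j => (s (φ j) * mu (φ j) l) * G l (x (φ j))) atTop
        (𝓝 (mub l * G l xb)) := (hmuc l).mul hGt
    have h2 : Tendsto (fun j => (s (φ j) * nu (φ j) l) * H l (x (φ j))) atTop
        (𝓝 (nub l * H l xb)) := (hnuc l).mul hHt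
    refine tendsto_nhds_unique (h1.congr (fun j => ?_)) h2
    simp only [mul_assoc]
    rw [hid (φ j) l]
  -- support condition for mub
  have hmubsupp : ∀ l, ¬(G l xb = 0 ∧ 0 ≤ H l xb) → mub l = 0 := by
    intro l hcond
    rcases lt_trichotomy (G l xb) 0 with hGlt | hGeq | hGgt
    · have hev : ∀ᶠ j in atTop, G l (x (φ j)) < 0 :=
        ((((hG l).continuous.tendsto xb).comp hxφ)).eventually_lt_const hGlt
      exact lim_eventually_zero (hmuc l) (hev.mono fun j hj => by
        rw [(hmuz (φ j) l (fun hcc => absurd hcc.1 (not_lt.2 hj.le))).1, mul_zero])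
    · have hHlt : H l xb < 0 := by
        by_contra hc
        exact hcond ⟨hGeq, not_lt.1 hc⟩
      have hev : ∀ᶠ j in atTop, H l (x (φ j)) < 0 :=
        ((((hH l).continuous.tendsto xb).comp hxφ)).eventually_lt_const hHlt
      exact lim_eventually_zero (hmuc l) (hev.mono fun j hj => by
        rw [(hmuz (φ j) l (fun hcc => absurd hcc.2 (not_lt.2 hj.le))).1, mul_zero])
    · have hHle : H l xb ≤ 0 := (hGHx l).resolve_left (not_le.2 hGgt)
      have hkey := hidlim l
      have h1 : nub l * H l xb ≤ 0 := mul_nonpos_of_nonneg_of_nonpos (hnubnn l) hHle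
      nlinarith [hmubnn l]
  -- support condition for nub
  have hnubsupp : ∀ l, ¬(H l xb = 0 ∧ 0 ≤ G l xb) → nub l = 0 := by
    intro l hcond
    rcases lt_trichotomy (H l xb) 0 with hHlt | hHeq | hHgt
    · have hev : ∀ᶠ j in atTop, H l (x (φ j)) < 0 :=
        ((((hH l).continuous.tendsto xb).comp hxφ)).eventually_lt_const hHlt
      exact lim_eventually_zero (hnuc l) (hev.mono fun j hj => by
        rw [(hmuz (φ j) l (fun hcc => absurd hcc.2 (not_lt.2 hj.le))).2, mul_zero])
    · have hGlt : G l xb < 0 := by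
        by_contra hc
        exact hcond ⟨hHeq, not_lt.1 hc⟩
      have hev : ∀ᶠ j in atTop, G l (x (φ j)) < 0 :=
        ((((hG l).continuous.tendsto xb).comp hxφ)).eventually_lt_const hGlt
      exact lim_eventually_zero (hnuc l) (hev.mono fun j hj => by
        rw [(hmuz (φ j) l (fun hcc => absurd hcc.1 (not_lt.2 hj.le))).2, mul_zero])
    · have hGle : G l xb ≤ 0 := (hGHx l).resolve_right (not_le.2 hHgt)
      have hkey := hidlim l
      have h1 : mub l * G l xb ≤ 0 := mul_nonpos_of_nonneg_of_nonpos (hmubnn l) hGle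
      nlinarith [hnubnn l]
  -- limit of the stationarity equation
  have hlim : sb • fderiv ℝ f xb + (∑ i, lamb i • fderiv ℝ (g i) xb)
      + (∑ j, rhob j • fderiv ℝ (h j) xb) + (∑ l, mub l • fderiv ℝ (G l) xb)
      + (∑ l, nub l • fderiv ℝ (H l) xb) = 0 := by
    have T0 : Tendsto (fun j => s (φ j) • fderiv ℝ f (x (φ j))) atTop
        (𝓝 (sb • fderiv ℝ f xb)) :=
      hsc.smul (((hf.continuous_fderiv one_ne_zero).tendsto xb).comp hxφ)
    have Tg : Tendsto (fun j => ∑ i, (s (φ j) * lam (φ j) i) • fderiv ℝ (g i) (x (φ j)))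
        atTop (𝓝 (∑ i, lamb i • fderiv ℝ (g i) xb)) :=
      tendsto_finset_sum _ fun i _ =>
        (hlamc i).smul ((((hg i).continuous_fderiv one_ne_zero).tendsto xb).comp hxφ)
    have Th : Tendsto (fun j => ∑ j', (s (φ j) * rho (φ j) j') • fderiv ℝ (h j') (x (φ j)))
        atTop (𝓝 (∑ j', rhob j' • fderiv ℝ (h j') xb)) :=
      tendsto_finset_sum _ fun j' _ =>
        (hrhoc j').smul ((((hh j').continuous_fderiv one_ne_zero).tendsto xb).comp hxφ)
    have TG : Tendsto (fun j => ∑ l, (s (φ j) * mu (φ j) l) • fderiv ℝ (G l) (x (φ j)))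
        atTop (𝓝 (∑ l, mub l • fderiv ℝ (G l) xb)) :=
      tendsto_finset_sum _ fun l _ =>
        (hmuc l).smul ((((hG l).continuous_fderiv one_ne_zero).tendsto xb).comp hxφ)
    have TH : Tendsto (fun j => ∑ l, (s (φ j) * nu (φ j) l) • fderiv ℝ (H l) (x (φ j)))
        atTop (𝓝 (∑ l, nub l • fderiv ℝ (H l) xb)) :=
      tendsto_finset_sum _ fun l _ =>
        (hnuc l).smul ((((hH l).continuous_fderiv one_ne_zero).tendsto xb).comp hxφ)
    have Tall := ((((T0.add Tg).add Th).add TG).add TH)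
    have hzero : ∀ j, s (φ j) • fderiv ℝ f (x (φ j))
        + (∑ i, (s (φ j) * lam (φ j) i) • fderiv ℝ (g i) (x (φ j)))
        + (∑ j', (s (φ j) * rho (φ j) j') • fderiv ℝ (h j') (x (φ j)))
        + (∑ l, (s (φ j) * mu (φ j) l) • fderiv ℝ (G l) (x (φ j)))
        + (∑ l, (s (φ j) * nu (φ j) l) • fderiv ℝ (H l) (x (φ j))) = 0 := by
      intro j
      have h0 := congrArg (fun L => s (φ j) • L) (hstat' (φ j))
      simpa only [smul_add, Finset.smul_sum, smul_smul, smul_zero] using h0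
    refine tendsto_nhds_unique Tall ?_
    simp only [hzero]
    exact tendsto_const_nhds
  -- sb cannot be zero
  rcases eq_or_lt_of_le hsbnn with hsz | hspos'
  · exfalso
    rw [← hsz, zero_smul, zero_add] at hlim
    obtain ⟨z1, z2, z3, z4⟩ := hmfcq lamb rhob mub nub hlambnn hlambsupp hmubnn hmubsupp
      hnubnn hnubsupp hlim
    have hwb2 : wb.2 = 0 := by
      have e1 : lamb = 0 := funext z1
      have e2 : rhob = 0 := funext z2
      have e3 : mub = 0 := funext z3
      have e4 : nub = 0 := funext z4
      rw [hlamb] at e1; rw [hrhob] at e2; rw [hmubdef] at e3; rw [hnubdef] at e4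
      exact Prod.ext e1 (Prod.ext e2 (Prod.ext e3 e4))
    have hn1 : Tendsto (fun j => ‖s (φ j) • c (φ j)‖) atTop (𝓝 ‖wb.2‖) :=
      (continuous_norm.tendsto wb.2).comp hdc
    have hn2 : Tendsto (fun j => 1 - s (φ j)) atTop (𝓝 (1 - sb)) :=
      tendsto_const_nhds.sub hsc
    have := tendsto_nhds_unique (hn1.congr fun j => hnormd (φ j)) hn2
    rw [hwb2, norm_zero, ← hsz] at this
    norm_num at this
  · -- sb > 0 : produce the W-stationarity multipliers
    refine ⟨fun i => sb⁻¹ * lamb i, fun j' => sb⁻¹ * rhob j', fun l => sb⁻¹ * mub l,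
      fun l => sb⁻¹ * nub l, fun i => mul_nonneg (inv_nonneg.2 hsbnn) (hlambnn i),
      fun i hne => by simp only [hlambsupp i hne, mul_zero],
      fun l => mul_nonneg (inv_nonneg.2 hsbnn) (hmubnn l),
      fun l hc => by simp only [hmubsupp l hc, mul_zero],
      fun l => mul_nonneg (inv_nonneg.2 hsbnn) (hnubnn l),
      fun l hc => by simp only [hnubsupp l hc, mul_zero], ?_⟩
    have h0 := congrArg (fun L => sb⁻¹ • L) hlim
    simpa only [smul_add, smul_smul, Finset.smul_sum, smul_zero,
      inv_mul_cancel₀ hspos'.ne', one_smul] using h0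
end
end

section
/- Let x̄ ∈ X be a feasible point of (MPOC) at which MPOC-MFCQ holds. Then there exists a neighborhood U ⊆ ℝⁿ of x̄ such that for every t > 0 and every x ∈ X(φ_FB^t) ∩ U, MFCQ holds for P(φ_FB^t) at x, i.e., the only coefficients λ_i ≥ 0 (i ∈ I^g(x)), ξ_l ≥ 0 (l ∈ I^{φ_FB^t}(x)), ρ_j ∈ ℝ (j ∈ P) with 0 = Σ λ_i ∇g_i(x) + Σ ρ_j ∇h_j(x) + Σ_{l ∈ I^{φ_FB^t}(x)} ξ_l [(1 − G_l(x)/√(G_l(x)² + H_l(x)² + 2t)) ∇G_l(x) + (1 − H_l(x)/√(G_l(x)² + H_l(x)² + 2t)) ∇H_l(x)] are all zero. -/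
noncomputable section

open Filter Topology

variable {n m p q : ℕ}

/-- At an active point of the smoothed FB constraint, both components are positive and
the square root collapses to the sum. -/
lemma phiFBt_active_facts {t a b : ℝ} (ht : 0 < t) (hab : phiFBt t (a, b) = 0) :
    0 < a ∧ 0 < b ∧ Real.sqrt (a ^ 2 + b ^ 2 + 2 * t) = a + b := by
  have hs : Real.sqrt (a ^ 2 + b ^ 2 + 2 * t) = a + b := by
    unfold phiFBt at hab; dsimp at hab; linarith
  have hpos : 0 < a + b := by
    rw [← hs]; apply Real.sqrt_pos.mpr; nlinarith
  have hsq : a ^ 2 + b ^ 2 + 2 * t = (a + b) ^ 2 := by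
    rw [← hs, Real.sq_sqrt]; nlinarith
  have hab2 : a * b = t := by nlinarith
  have ha : 0 < a := by nlinarith
  have hb : 0 < b := by nlinarith
  exact ⟨ha, hb, hs⟩

set_option maxHeartbeats 1000000 in
/-- Under MPOC-MFCQ, standard MFCQ holds for the relaxed problems P(φ_FB^t) at all
feasible points in a neighborhood of the reference point, uniformly in `t > 0`. -/
theorem regularity_smoothedFB {n m p q : ℕ} (f : (Fin n → ℝ) → ℝ)
    (g : Fin m → (Fin n → ℝ) → ℝ) (h : Fin p → (Fin n → ℝ) → ℝ)
    (G H : Fin q → (Fin n → ℝ) → ℝ)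
    (hf : ContDiff ℝ 1 f) (hg : ∀ i, ContDiff ℝ 1 (g i)) (hh : ∀ j, ContDiff ℝ 1 (h j))
    (hG : ∀ l, ContDiff ℝ 1 (G l)) (hH : ∀ l, ContDiff ℝ 1 (H l))
    (xb : Fin n → ℝ) (hxb : xb ∈ feasMPOC g h G H) (hmfcq : MPOC_MFCQ g h G H xb) :
    ∃ U ∈ nhds xb, ∀ t : ℝ, 0 < t → ∀ x ∈ relFeas g h G H phiFBt t ∩ U,
      ∀ (lam : Fin m → ℝ) (rho : Fin p → ℝ) (xi : Fin q → ℝ),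
        (∀ i, 0 ≤ lam i) → (∀ i, g i x ≠ 0 → lam i = 0) →
        (∀ l, 0 ≤ xi l) → (∀ l, phiFBt t (G l x, H l x) ≠ 0 → xi l = 0) →
        ((∑ i, lam i • fderiv ℝ (g i) x) + (∑ j, rho j • fderiv ℝ (h j) x)
          + (∑ l, xi l •
            ((1 - G l x / Real.sqrt ((G l x) ^ 2 + (H l x) ^ 2 + 2 * t)) •
                fderiv ℝ (G l) x
              + (1 - H l x / Real.sqrt ((G l x) ^ 2 + (H l x) ^ 2 + 2 * t)) •
                fderiv ℝ (H l) x)) = 0) →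
        (∀ i, lam i = 0) ∧ (∀ j, rho j = 0) ∧ (∀ l, xi l = 0) := by
  classical
  by_contra hcon
  -- Step 1: extract a sequence of bad points
  have key : ∀ k : ℕ, ∃ t : ℝ, ∃ x : Fin n → ℝ, ∃ lam : Fin m → ℝ, ∃ rho : Fin p → ℝ,
      ∃ xi : Fin q → ℝ,
      0 < t ∧ x ∈ relFeas g h G H phiFBt t ∧ dist x xb < 1 / (k + 1 : ℝ) ∧
      (∀ i, 0 ≤ lam i) ∧ (∀ i, g i x ≠ 0 → lam i = 0) ∧
      (∀ l, 0 ≤ xi l) ∧ (∀ l, phiFBt t (G l x, H l x) ≠ 0 → xi l = 0) ∧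
      ((∑ i, lam i • fderiv ℝ (g i) x) + (∑ j, rho j • fderiv ℝ (h j) x)
          + (∑ l, xi l •
            ((1 - G l x / Real.sqrt ((G l x) ^ 2 + (H l x) ^ 2 + 2 * t)) •
                fderiv ℝ (G l) x
              + (1 - H l x / Real.sqrt ((G l x) ^ 2 + (H l x) ^ 2 + 2 * t)) •
                fderiv ℝ (H l) x)) = 0) ∧
      ¬((∀ i, lam i = 0) ∧ (∀ j, rho j = 0) ∧ (∀ l, xi l = 0)) := by
    intro k
    by_contra hk
    refine hcon ⟨Metric.ball xb (1 / (k + 1 : ℝ)), Metric.ball_mem_nhds _ (by positivity), ?_⟩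
    intro t ht x hx lam rho xi c1 c2 c3 c4 ceq
    by_contra hz
    exact hk ⟨t, x, lam, rho, xi, ht, hx.1, by simpa [Metric.mem_ball] using hx.2,
      c1, c2, c3, c4, ceq, hz⟩
  choose t x lam rho xi hkey using key
  have ht : ∀ k, 0 < t k := fun k => (hkey k).1
  have hfeas : ∀ k, x k ∈ relFeas g h G H phiFBt (t k) := fun k => (hkey k).2.1
  have hdist : ∀ k, dist (x k) xb < 1 / (k + 1 : ℝ) := fun k => (hkey k).2.2.1
  have h1 : ∀ k i, 0 ≤ lam k i := fun k => (hkey k).2.2.2.1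
  have h2 : ∀ k i, g i (x k) ≠ 0 → lam k i = 0 := fun k => (hkey k).2.2.2.2.1
  have h3 : ∀ k l, 0 ≤ xi k l := fun k => (hkey k).2.2.2.2.2.1
  have h4 : ∀ k l, phiFBt (t k) (G l (x k), H l (x k)) ≠ 0 → xi k l = 0 :=
    fun k => (hkey k).2.2.2.2.2.2.1
  have heq : ∀ k, (∑ i, lam k i • fderiv ℝ (g i) (x k)) + (∑ j, rho k j • fderiv ℝ (h j) (x k))
      + (∑ l, xi k l •
        ((1 - G l (x k) / Real.sqrt ((G l (x k)) ^ 2 + (H l (x k)) ^ 2 + 2 * t k)) •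
            fderiv ℝ (G l) (x k)
          + (1 - H l (x k) / Real.sqrt ((G l (x k)) ^ 2 + (H l (x k)) ^ 2 + 2 * t k)) •
            fderiv ℝ (H l) (x k))) = 0 := fun k => (hkey k).2.2.2.2.2.2.2.1
  have hnz : ∀ k, ¬((∀ i, lam k i = 0) ∧ (∀ j, rho k j = 0) ∧ (∀ l, xi k l = 0)) :=
    fun k => (hkey k).2.2.2.2.2.2.2.2
  -- x tends to xb
  have hx_tend : Filter.Tendsto x atTop (𝓝 xb) := by
    rw [tendsto_iff_dist_tendsto_zero]
    exact squeeze_zero (fun k => dist_nonneg) (fun k => (hdist k).le)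
      tendsto_one_div_add_atTop_nhds_zero_nat
  -- active-point facts
  have hActive : ∀ k l, phiFBt (t k) (G l (x k), H l (x k)) = 0 →
      0 < G l (x k) ∧ 0 < H l (x k) ∧
      Real.sqrt ((G l (x k)) ^ 2 + (H l (x k)) ^ 2 + 2 * t k) = G l (x k) + H l (x k) :=
    fun k l hact => phiFBt_active_facts (ht k) hact
  -- modified subgradient coefficients
  obtain ⟨a, ha⟩ : ∃ a : ℕ → Fin q → ℝ, ∀ k l, a k l =
      if phiFBt (t k) (G l (x k), H l (x k)) = 0
      then H l (x k) / (G l (x k) + H l (x k)) else 1 / 2 := ⟨_, fun _ _ => rfl⟩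
  obtain ⟨b, hb⟩ : ∃ b : ℕ → Fin q → ℝ, ∀ k l, b k l =
      if phiFBt (t k) (G l (x k), H l (x k)) = 0
      then G l (x k) / (G l (x k) + H l (x k)) else 1 / 2 := ⟨_, fun _ _ => rfl⟩
  have hab_mem : ∀ k l, 0 ≤ a k l ∧ a k l ≤ 1 ∧ 0 ≤ b k l ∧ b k l ≤ 1 ∧ a k l + b k l = 1 := by
    intro k l
    by_cases hact : phiFBt (t k) (G l (x k), H l (x k)) = 0
    · obtain ⟨hG1, hH1, -⟩ := hActive k l hact
      have hs : 0 < G l (x k) + H l (x k) := by linarith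
      rw [ha, hb, if_pos hact, if_pos hact]
      refine ⟨by positivity, by rw [div_le_one hs]; linarith, by positivity,
        by rw [div_le_one hs]; linarith, ?_⟩
      rw [← add_div, add_comm (H l (x k)), div_self hs.ne']
    · rw [ha, hb, if_neg hact, if_neg hact]; norm_num
  -- rewritten gradient equation
  have heq' : ∀ k, (∑ i, lam k i • fderiv ℝ (g i) (x k)) + (∑ j, rho k j • fderiv ℝ (h j) (x k))
      + (∑ l, xi k l • (a k l • fderiv ℝ (G l) (x k) + b k l • fderiv ℝ (H l) (x k))) = 0 := by
    intro k
    rw [← heq k]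
    congr 1
    refine Finset.sum_congr rfl fun l _ => ?_
    by_cases hact : phiFBt (t k) (G l (x k), H l (x k)) = 0
    · obtain ⟨hG1, hH1, hs⟩ := hActive k l hact
      have hgh : G l (x k) + H l (x k) ≠ 0 := by positivity
      have e1 : a k l = 1 - G l (x k) /
          Real.sqrt ((G l (x k)) ^ 2 + (H l (x k)) ^ 2 + 2 * t k) := by
        rw [ha, if_pos hact, hs]; field_simp; ring
      have e2 : b k l = 1 - H l (x k) /
          Real.sqrt ((G l (x k)) ^ 2 + (H l (x k)) ^ 2 + 2 * t k) := by
        rw [hb, if_pos hact, hs]; field_simp; ring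
      rw [e1, e2]
    · rw [h4 k l hact, zero_smul, zero_smul]
  -- normalization
  have hvne : ∀ k, ((lam k, rho k, xi k) :
      (Fin m → ℝ) × (Fin p → ℝ) × (Fin q → ℝ)) ≠ 0 := by
    intro k hk0
    refine hnz k ⟨fun i => ?_, fun j => ?_, fun l => ?_⟩
    · exact congrFun (congrArg (fun w => w.1) hk0) i
    · exact congrFun (congrArg (fun w => w.2.1) hk0) j
    · exact congrFun (congrArg (fun w => w.2.2) hk0) l
  obtain ⟨c, hc⟩ : ∃ c : ℕ → ℝ, ∀ k, c k =
      ‖((lam k, rho k, xi k) : (Fin m → ℝ) × (Fin p → ℝ) × (Fin q → ℝ))‖⁻¹ :=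
    ⟨_, fun _ => rfl⟩
  have hc_pos : ∀ k, 0 < c k := by
    intro k
    rw [hc]
    exact inv_pos.mpr (norm_pos_iff.mpr (hvne k))
  obtain ⟨lam', hlam'⟩ : ∃ lam' : ℕ → Fin m → ℝ, ∀ k i, lam' k i = c k * lam k i :=
    ⟨_, fun _ _ => rfl⟩
  obtain ⟨rho', hrho'⟩ : ∃ rho' : ℕ → Fin p → ℝ, ∀ k j, rho' k j = c k * rho k j :=
    ⟨_, fun _ _ => rfl⟩
  obtain ⟨xi', hxi'⟩ : ∃ xi' : ℕ → Fin q → ℝ, ∀ k l, xi' k l = c k * xi k l :=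
    ⟨_, fun _ _ => rfl⟩
  have hu_eq : ∀ k, ((lam' k, rho' k, xi' k) :
      (Fin m → ℝ) × (Fin p → ℝ) × (Fin q → ℝ)) = c k • (lam k, rho k, xi k) := by
    intro k
    refine Prod.ext (funext fun i => hlam' k i) (Prod.ext (funext fun j => hrho' k j)
      (funext fun l => hxi' k l))
  have hu_norm : ∀ k, ‖((lam' k, rho' k, xi' k) :
      (Fin m → ℝ) × (Fin p → ℝ) × (Fin q → ℝ))‖ = 1 := by
    intro k
    rw [hu_eq k, hc]
    exact norm_smul_inv_norm (hvne k)
  -- scaled equation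
  have heq2 : ∀ k, (∑ i, lam' k i • fderiv ℝ (g i) (x k))
      + (∑ j, rho' k j • fderiv ℝ (h j) (x k))
      + (∑ l, xi' k l • (a k l • fderiv ℝ (G l) (x k) + b k l • fderiv ℝ (H l) (x k))) = 0 := by
    intro k
    have h0 : c k • ((∑ i, lam k i • fderiv ℝ (g i) (x k))
        + (∑ j, rho k j • fderiv ℝ (h j) (x k))
        + (∑ l, xi k l • (a k l • fderiv ℝ (G l) (x k) + b k l • fderiv ℝ (H l) (x k)))) = 0 := by
      rw [heq' k, smul_zero]
    rw [smul_add, smul_add, Finset.smul_sum, Finset.smul_sum, Finset.smul_sum] at h0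
    have e1 : ∑ i, c k • lam k i • fderiv ℝ (g i) (x k)
        = ∑ i, lam' k i • fderiv ℝ (g i) (x k) :=
      Finset.sum_congr rfl fun i _ => by rw [smul_smul, ← hlam']
    have e2 : ∑ j, c k • rho k j • fderiv ℝ (h j) (x k)
        = ∑ j, rho' k j • fderiv ℝ (h j) (x k) :=
      Finset.sum_congr rfl fun j _ => by rw [smul_smul, ← hrho']
    have e3 : ∑ l, c k • xi k l • (a k l • fderiv ℝ (G l) (x k) + b k l • fderiv ℝ (H l) (x k))
        = ∑ l, xi' k l • (a k l • fderiv ℝ (G l) (x k) + b k l • fderiv ℝ (H l) (x k)) :=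
      Finset.sum_congr rfl fun l _ => by rw [smul_smul, ← hxi']
    rw [e1, e2, e3] at h0
    exact h0
  -- compactness
  set V := (Fin m → ℝ) × (Fin p → ℝ) × (Fin q → ℝ) with hV
  have hK : IsCompact ((Metric.sphere (0 : V) 1) ×ˢ
      ((Set.Icc (0 : Fin q → ℝ) 1) ×ˢ (Set.Icc (0 : Fin q → ℝ) 1))) :=
    (isCompact_sphere 0 1).prod (isCompact_Icc.prod isCompact_Icc)
  have hmemK : ∀ k, (((lam' k, rho' k, xi' k), (a k, b k)) :
      V × (Fin q → ℝ) × (Fin q → ℝ)) ∈ (Metric.sphere (0 : V) 1) ×ˢ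
      ((Set.Icc (0 : Fin q → ℝ) 1) ×ˢ (Set.Icc (0 : Fin q → ℝ) 1)) := by
    intro k
    refine ⟨mem_sphere_zero_iff_norm.mpr (hu_norm k), ⟨?_, ?_⟩, ⟨?_, ?_⟩⟩
    · intro l; exact (hab_mem k l).1
    · intro l; exact (hab_mem k l).2.1
    · intro l; exact (hab_mem k l).2.2.1
    · intro l; exact (hab_mem k l).2.2.2.1
  obtain ⟨⟨⟨lam0, rho0, xi0⟩, a0, b0⟩, hWmem, φ, hφ, htend⟩ := hK.tendsto_subseq hmemK
  have hxφ : Filter.Tendsto (fun k => x (φ k)) atTop (𝓝 xb) :=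
    hx_tend.comp hφ.tendsto_atTop
  -- component limits
  have htl : Filter.Tendsto (fun k => lam' (φ k)) atTop (𝓝 lam0) :=
    ((continuous_fst.comp continuous_fst).tendsto _).comp htend
  have htr : Filter.Tendsto (fun k => rho' (φ k)) atTop (𝓝 rho0) :=
    (((continuous_fst.comp continuous_snd).comp continuous_fst).tendsto _).comp htend
  have htx : Filter.Tendsto (fun k => xi' (φ k)) atTop (𝓝 xi0) :=
    (((continuous_snd.comp continuous_snd).comp continuous_fst).tendsto _).comp htend
  have hta : Filter.Tendsto (fun k => a (φ k)) atTop (𝓝 a0) :=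
    ((continuous_fst.comp continuous_snd).tendsto _).comp htend
  have htb : Filter.Tendsto (fun k => b (φ k)) atTop (𝓝 b0) :=
    ((continuous_snd.comp continuous_snd).tendsto _).comp htend
  have htl_i : ∀ i, Filter.Tendsto (fun k => lam' (φ k) i) atTop (𝓝 (lam0 i)) :=
    fun i => tendsto_pi_nhds.mp htl i
  have htr_j : ∀ j, Filter.Tendsto (fun k => rho' (φ k) j) atTop (𝓝 (rho0 j)) :=
    fun j => tendsto_pi_nhds.mp htr j
  have htx_l : ∀ l, Filter.Tendsto (fun k => xi' (φ k) l) atTop (𝓝 (xi0 l)) :=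
    fun l => tendsto_pi_nhds.mp htx l
  have hta_l : ∀ l, Filter.Tendsto (fun k => a (φ k) l) atTop (𝓝 (a0 l)) :=
    fun l => tendsto_pi_nhds.mp hta l
  have htb_l : ∀ l, Filter.Tendsto (fun k => b (φ k) l) atTop (𝓝 (b0 l)) :=
    fun l => tendsto_pi_nhds.mp htb l
  -- limits of the gradients
  have hDg : ∀ i, Filter.Tendsto (fun k => fderiv ℝ (g i) (x (φ k))) atTop
      (𝓝 (fderiv ℝ (g i) xb)) :=
    fun i => (((hg i).continuous_fderiv one_ne_zero).tendsto xb).comp hxφ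
  have hDh : ∀ j, Filter.Tendsto (fun k => fderiv ℝ (h j) (x (φ k))) atTop
      (𝓝 (fderiv ℝ (h j) xb)) :=
    fun j => (((hh j).continuous_fderiv one_ne_zero).tendsto xb).comp hxφ
  have hDG : ∀ l, Filter.Tendsto (fun k => fderiv ℝ (G l) (x (φ k))) atTop
      (𝓝 (fderiv ℝ (G l) xb)) :=
    fun l => (((hG l).continuous_fderiv one_ne_zero).tendsto xb).comp hxφ
  have hDH : ∀ l, Filter.Tendsto (fun k => fderiv ℝ (H l) (x (φ k))) atTop
      (𝓝 (fderiv ℝ (H l) xb)) :=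
    fun l => (((hH l).continuous_fderiv one_ne_zero).tendsto xb).comp hxφ
  have hGt : ∀ l, Filter.Tendsto (fun k => G l (x (φ k))) atTop (𝓝 (G l xb)) :=
    fun l => ((hG l).continuous.tendsto xb).comp hxφ
  have hHt : ∀ l, Filter.Tendsto (fun k => H l (x (φ k))) atTop (𝓝 (H l xb)) :=
    fun l => ((hH l).continuous.tendsto xb).comp hxφ
  -- limit of the equation
  have hlim : Filter.Tendsto (fun k => (∑ i, lam' (φ k) i • fderiv ℝ (g i) (x (φ k)))
      + (∑ j, rho' (φ k) j • fderiv ℝ (h j) (x (φ k)))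
      + (∑ l, xi' (φ k) l • (a (φ k) l • fderiv ℝ (G l) (x (φ k))
          + b (φ k) l • fderiv ℝ (H l) (x (φ k))))) atTop
      (𝓝 ((∑ i, lam0 i • fderiv ℝ (g i) xb) + (∑ j, rho0 j • fderiv ℝ (h j) xb)
      + (∑ l, xi0 l • (a0 l • fderiv ℝ (G l) xb + b0 l • fderiv ℝ (H l) xb)))) := by
    refine Filter.Tendsto.add (Filter.Tendsto.add ?_ ?_) ?_
    · exact tendsto_finset_sum _ fun i _ => (htl_i i).smul (hDg i)
    · exact tendsto_finset_sum _ fun j _ => (htr_j j).smul (hDh j)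
    · exact tendsto_finset_sum _ fun l _ =>
        (htx_l l).smul (((hta_l l).smul (hDG l)).add ((htb_l l).smul (hDH l)))
  have eq0 : (∑ i, lam0 i • fderiv ℝ (g i) xb) + (∑ j, rho0 j • fderiv ℝ (h j) xb)
      + (∑ l, xi0 l • (a0 l • fderiv ℝ (G l) xb + b0 l • fderiv ℝ (H l) xb)) = 0 :=
    tendsto_nhds_unique hlim
      (Filter.Tendsto.congr (fun k => (heq2 (φ k)).symm) tendsto_const_nhds)
  -- properties of the limit multipliers
  have hlam0_nn : ∀ i, 0 ≤ lam0 i := by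
    intro i
    refine ge_of_tendsto' (htl_i i) fun k => ?_
    rw [hlam']
    exact mul_nonneg (hc_pos _).le (h1 _ i)
  have hxi0_nn : ∀ l, 0 ≤ xi0 l := by
    intro l
    refine ge_of_tendsto' (htx_l l) fun k => ?_
    rw [hxi']
    exact mul_nonneg (hc_pos _).le (h3 _ l)
  have hlam0_supp : ∀ i, g i xb ≠ 0 → lam0 i = 0 := by
    intro i hgi
    have hlt : g i xb < 0 := lt_of_le_of_ne (hxb.1 i) hgi
    have hev : ∀ᶠ k in atTop, g i (x (φ k)) < 0 :=
      (((hg i).continuous.tendsto xb).comp hxφ).eventually_lt_const hlt |>.mono fun k hk => hk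
    have hev0 : ∀ᶠ k in atTop, lam' (φ k) i = 0 := by
      refine hev.mono fun k hk => ?_
      rw [hlam', h2 _ i (ne_of_lt hk), mul_zero]
    exact tendsto_nhds_unique (htl_i i)
      (Filter.Tendsto.congr' (hev0.mono fun k hk => hk.symm) tendsto_const_nhds)
  -- the biactive analysis
  have hbig : ∀ l, xi0 l ≠ 0 →
      (0 ≤ G l xb ∧ 0 ≤ H l xb ∧
       (G l xb ≠ 0 → a0 l = 0) ∧ (H l xb ≠ 0 → b0 l = 0)) := by
    intro l h0
    have hev : ∀ᶠ k in atTop, phiFBt (t (φ k)) (G l (x (φ k)), H l (x (φ k))) = 0 := by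
      refine ((htx_l l).eventually_ne h0).mono fun k hk => ?_
      by_contra hact
      exact hk (by rw [hxi', h4 _ l hact, mul_zero])
    have hGpos : ∀ᶠ k in atTop, 0 < G l (x (φ k)) :=
      hev.mono fun k hk => (hActive _ l hk).1
    have hHpos : ∀ᶠ k in atTop, 0 < H l (x (φ k)) :=
      hev.mono fun k hk => (hActive _ l hk).2.1
    have hGb : 0 ≤ G l xb := ge_of_tendsto (hGt l) (hGpos.mono fun k hk => hk.le)
    have hHb : 0 ≤ H l xb := ge_of_tendsto (hHt l) (hHpos.mono fun k hk => hk.le)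
    refine ⟨hGb, hHb, ?_, ?_⟩
    · intro hGne
      have hGpos' : 0 < G l xb := lt_of_le_of_ne hGb (Ne.symm hGne)
      have hH0 : H l xb = 0 := by
        rcases hxb.2.2 l with hcase | hcase
        · linarith
        · linarith
      have hden : G l xb + H l xb ≠ 0 := by rw [hH0, add_zero]; exact hGne
      have hquot : Filter.Tendsto (fun k => H l (x (φ k)) / (G l (x (φ k)) + H l (x (φ k))))
          atTop (𝓝 (H l xb / (G l xb + H l xb))) :=
        (hHt l).div ((hGt l).add (hHt l)) hden
      have haev : ∀ᶠ k in atTop, a (φ k) l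
          = H l (x (φ k)) / (G l (x (φ k)) + H l (x (φ k))) :=
        hev.mono fun k hk => by rw [ha, if_pos hk]
      have := tendsto_nhds_unique (hta_l l)
        (hquot.congr' (haev.mono fun k hk => hk.symm))
      rw [this, hH0, zero_div]
    · intro hHne
      have hHpos' : 0 < H l xb := lt_of_le_of_ne hHb (Ne.symm hHne)
      have hG0 : G l xb = 0 := by
        rcases hxb.2.2 l with hcase | hcase
        · linarith
        · linarith
      have hden : G l xb + H l xb ≠ 0 := by rw [hG0, zero_add]; exact hHne
      have hquot : Filter.Tendsto (fun k => G l (x (φ k)) / (G l (x (φ k)) + H l (x (φ k))))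
          atTop (𝓝 (G l xb / (G l xb + H l xb))) :=
        (hGt l).div ((hGt l).add (hHt l)) hden
      have hbev : ∀ᶠ k in atTop, b (φ k) l
          = G l (x (φ k)) / (G l (x (φ k)) + H l (x (φ k))) :=
        hev.mono fun k hk => by rw [hb, if_pos hk]
      have := tendsto_nhds_unique (htb_l l)
        (hquot.congr' (hbev.mono fun k hk => hk.symm))
      rw [this, hG0, zero_div]
  -- mu and nu
  obtain ⟨mu, hmu⟩ : ∃ mu : Fin q → ℝ, ∀ l, mu l = xi0 l * a0 l := ⟨_, fun _ => rfl⟩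
  obtain ⟨nu, hnu⟩ : ∃ nu : Fin q → ℝ, ∀ l, nu l = xi0 l * b0 l := ⟨_, fun _ => rfl⟩
  have ha0_mem : a0 ∈ Set.Icc (0 : Fin q → ℝ) 1 := hWmem.2.1
  have hb0_mem : b0 ∈ Set.Icc (0 : Fin q → ℝ) 1 := hWmem.2.2
  have hmu_nn : ∀ l, 0 ≤ mu l := fun l => by
    rw [hmu]; exact mul_nonneg (hxi0_nn l) (ha0_mem.1 l)
  have hnu_nn : ∀ l, 0 ≤ nu l := fun l => by
    rw [hnu]; exact mul_nonneg (hxi0_nn l) (hb0_mem.1 l)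
  have hmu_supp : ∀ l, ¬(G l xb = 0 ∧ 0 ≤ H l xb) → mu l = 0 := by
    intro l hl
    rw [hmu]
    rcases eq_or_ne (xi0 l) 0 with h0 | h0
    · rw [h0, zero_mul]
    · obtain ⟨hGb, hHb, hGi, -⟩ := hbig l h0
      have hGne : G l xb ≠ 0 := fun hc => hl ⟨hc, hHb⟩
      rw [hGi hGne, mul_zero]
  have hnu_supp : ∀ l, ¬(H l xb = 0 ∧ 0 ≤ G l xb) → nu l = 0 := by
    intro l hl
    rw [hnu]
    rcases eq_or_ne (xi0 l) 0 with h0 | h0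
    · rw [h0, zero_mul]
    · obtain ⟨hGb, hHb, -, hHi⟩ := hbig l h0
      have hHne : H l xb ≠ 0 := fun hc => hl ⟨hc, hGb⟩
      rw [hHi hHne, mul_zero]
  -- rewrite the limit equation
  have split : (∑ l, xi0 l • (a0 l • fderiv ℝ (G l) xb + b0 l • fderiv ℝ (H l) xb))
      = (∑ l, mu l • fderiv ℝ (G l) xb) + (∑ l, nu l • fderiv ℝ (H l) xb) := by
    rw [← Finset.sum_add_distrib]
    exact Finset.sum_congr rfl fun l _ => by
      rw [smul_add, smul_smul, smul_smul, hmu, hnu]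
  rw [split, ← add_assoc] at eq0
  obtain ⟨hl0, hr0, hm0, hn0⟩ := hmfcq lam0 rho0 mu nu hlam0_nn hlam0_supp
    hmu_nn hmu_supp hnu_nn hnu_supp eq0
  -- sum of coefficients is one in the limit
  have hab1 : ∀ l, a0 l + b0 l = 1 := by
    intro l
    refine tendsto_nhds_unique ((hta_l l).add (htb_l l)) ?_
    have hfun : (fun k => a (φ k) l + b (φ k) l) = fun _ => (1 : ℝ) :=
      funext fun k => (hab_mem (φ k) l).2.2.2.2
    rw [hfun]
    exact tendsto_const_nhds
  have hxi0_zero : ∀ l, xi0 l = 0 := by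
    intro l
    calc xi0 l = xi0 l * (a0 l + b0 l) := by rw [hab1 l, mul_one]
      _ = xi0 l * a0 l + xi0 l * b0 l := mul_add _ _ _
      _ = mu l + nu l := by rw [hmu, hnu]
      _ = 0 := by rw [hm0 l, hn0 l, add_zero]
  -- contradiction with the unit norm
  have hzero : ((lam0, rho0, xi0) : V) = 0 :=
    Prod.ext (funext hl0) (Prod.ext (funext hr0) (funext hxi0_zero))
  have hnorm1 : ‖((lam0, rho0, xi0) : V)‖ = 1 := mem_sphere_zero_iff_norm.mp hWmem.1
  rw [hzero, norm_zero] at hnorm1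
  exact zero_ne_one hnorm1
end
end

section
/- Let {t_k} be a sequence of positive relaxation parameters converging to zero, and for each k let x_k be a KKT point of the relaxed problem P(φ_KS^{t_k}). Suppose the sequence {x_k} converges to a point x̄ ∈ X at which MPOC-MFCQ holds. Then x̄ is a W-stationary point of (MPOC). -/
noncomputable section

open Filter Topology

variable {n m p q : ℕ}

lemma phiKSt_active {t a b : ℝ} (ht : 0 < t) (h : phiKSt t (a, b) = 0) :
    0 < a ∧ 0 < b ∧ a * b = t := by
  have h' : phiKS (a, b) = t := by unfold phiKSt at h; linarith
  unfold phiKS at h'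
  simp only at h'
  split_ifs at h' with hab
  · have ha : 0 < a := by
      by_contra hc
      push_neg at hc
      have hb : 0 ≤ b := by linarith
      nlinarith
    have hb : 0 < b := by
      by_contra hc
      push_neg at hc
      have hb : 0 ≤ a := by linarith
      nlinarith
    exact ⟨ha, hb, h'⟩
  · nlinarith [sq_nonneg a, sq_nonneg b]

lemma aux_scale {io it il : Type*} [Fintype io] [Fintype it] [Fintype il]
    {M : Type*} [AddCommGroup M] [Module ℝ M] (c : ℝ) (A : M)
    (a : io → ℝ) (va : io → M) (b : it → ℝ) (vb : it → M)
    (d e : il → ℝ) (vd ve : il → M)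
    (hsum : A + (∑ i, a i • va i) + (∑ j, b j • vb j) + (∑ l, d l • vd l)
      + (∑ l, e l • ve l) = 0) :
    c • A + (∑ i, (c * a i) • va i) + (∑ j, (c * b j) • vb j)
      + (∑ l, (c * d l) • vd l) + (∑ l, (c * e l) • ve l) = 0 := by
  have h0 := congrArg (fun T => c • T) hsum
  simpa [smul_add, Finset.smul_sum, smul_smul] using h0

set_option maxHeartbeats 1000000 in
/-- Convergence of the Scholtes-type relaxation scheme based on the offset
Kanzow–Schwartz function: limits of KKT points of P(φ_KS^{t_k}) are W-stationary for
(MPOC) under MPOC-MFCQ. -/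
theorem convergence_offsetKS {n m p q : ℕ} (f : (Fin n → ℝ) → ℝ)
    (g : Fin m → (Fin n → ℝ) → ℝ) (h : Fin p → (Fin n → ℝ) → ℝ)
    (G H : Fin q → (Fin n → ℝ) → ℝ)
    (hf : ContDiff ℝ 1 f) (hg : ∀ i, ContDiff ℝ 1 (g i)) (hh : ∀ j, ContDiff ℝ 1 (h j))
    (hG : ∀ l, ContDiff ℝ 1 (G l)) (hH : ∀ l, ContDiff ℝ 1 (H l))
    (t : ℕ → ℝ) (ht : ∀ k, 0 < t k) (htlim : Filter.Tendsto t Filter.atTop (nhds 0))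
    (x : ℕ → Fin n → ℝ)
    (hkkt : ∀ k, x k ∈ relFeas g h G H phiKSt (t k) ∧
      ∃ (lam : Fin m → ℝ) (rho : Fin p → ℝ) (xi : Fin q → ℝ),
        (∀ i, 0 ≤ lam i) ∧ (∀ i, g i (x k) ≠ 0 → lam i = 0) ∧
        (∀ l, 0 ≤ xi l) ∧ (∀ l, phiKSt (t k) (G l (x k), H l (x k)) ≠ 0 → xi l = 0) ∧
        fderiv ℝ f (x k) + (∑ i, lam i • fderiv ℝ (g i) (x k))
          + (∑ j, rho j • fderiv ℝ (h j) (x k))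
          + (∑ l, xi l •
            (H l (x k) • fderiv ℝ (G l) (x k) + G l (x k) • fderiv ℝ (H l) (x k))) = 0)
    (xb : Fin n → ℝ) (hconv : Filter.Tendsto x Filter.atTop (nhds xb))
    (hxb : xb ∈ feasMPOC g h G H) (hmfcq : MPOC_MFCQ g h G H xb) :
    WStat f g h G H xb := by
  classical
  choose lam rho xi hlam0 hlamsupp hxi0 hxisupp heq using fun k => (hkkt k).2
  -- dichotomy for each or-constraint multiplier
  have hdich : ∀ k l, xi k l = 0 ∨
      (0 < G l (x k) ∧ 0 < H l (x k) ∧ G l (x k) * H l (x k) = t k) := by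
    intro k l
    by_cases hx : phiKSt (t k) (G l (x k), H l (x k)) = 0
    · exact Or.inr (phiKSt_active (ht k) hx)
    · exact Or.inl (hxisupp k l hx)
  have hmu0 : ∀ k l, 0 ≤ xi k l * H l (x k) := by
    intro k l
    rcases hdich k l with h0 | ⟨_, hH1, _⟩
    · simp [h0]
    · exact mul_nonneg (hxi0 k l) hH1.le
  have hnu0 : ∀ k l, 0 ≤ xi k l * G l (x k) := by
    intro k l
    rcases hdich k l with h0 | ⟨hG1, _, _⟩
    · simp [h0]
    · exact mul_nonneg (hxi0 k l) hG1.le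
  -- rewritten stationarity
  have heq' : ∀ k,
      fderiv ℝ f (x k) + (∑ i, lam k i • fderiv ℝ (g i) (x k))
        + (∑ j, rho k j • fderiv ℝ (h j) (x k))
        + (∑ l, (xi k l * H l (x k)) • fderiv ℝ (G l) (x k))
        + (∑ l, (xi k l * G l (x k)) • fderiv ℝ (H l) (x k)) = 0 := by
    intro k
    have h0 := heq k
    simp only [smul_add, smul_smul] at h0
    rw [Finset.sum_add_distrib, ← add_assoc] at h0
    exact h0
  -- normalization
  set Nf : ℕ → ℝ := fun k =>
    1 + (∑ i, lam k i) + (∑ j, |rho k j|) + (∑ l, xi k l * H l (x k))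
      + (∑ l, xi k l * G l (x k)) with hNf
  have hsums : ∀ k, 0 ≤ (∑ i, lam k i) ∧ 0 ≤ (∑ j, |rho k j|) ∧
      0 ≤ (∑ l, xi k l * H l (x k)) ∧ 0 ≤ (∑ l, xi k l * G l (x k)) := fun k =>
    ⟨Finset.sum_nonneg fun i _ => hlam0 k i, Finset.sum_nonneg fun j _ => abs_nonneg _,
     Finset.sum_nonneg fun l _ => hmu0 k l, Finset.sum_nonneg fun l _ => hnu0 k l⟩
  have hN1 : ∀ k, (1:ℝ) ≤ Nf k := by
    intro k
    obtain ⟨h1, h2, h3, h4⟩ := hsums k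
    simp only [hNf]; linarith
  set s : ℕ → ℝ := fun k => (Nf k)⁻¹ with hs_def
  have hspos : ∀ k, 0 < s k := fun k => inv_pos.mpr (lt_of_lt_of_le one_pos (hN1 k))
  have hsN : ∀ k, s k * Nf k = 1 := fun k =>
    inv_mul_cancel₀ (by linarith [hN1 k])
  have habs : ∀ k z, |z| ≤ Nf k → |s k * z| ≤ 1 := by
    intro k z hz
    rw [abs_mul, abs_of_pos (hspos k)]
    calc s k * |z| ≤ s k * Nf k := mul_le_mul_of_nonneg_left hz (hspos k).le
    _ = 1 := hsN k
  -- componentwise bounds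
  have hlam_le : ∀ k i, |lam k i| ≤ Nf k := by
    intro k i
    obtain ⟨h1, h2, h3, h4⟩ := hsums k
    rw [abs_of_nonneg (hlam0 k i)]
    have := Finset.single_le_sum (f := fun i => lam k i) (fun i _ => hlam0 k i)
      (Finset.mem_univ i)
    simp only [hNf]; linarith
  have hrho_le : ∀ k j, |rho k j| ≤ Nf k := by
    intro k j
    obtain ⟨h1, h2, h3, h4⟩ := hsums k
    have := Finset.single_le_sum (f := fun j => |rho k j|) (fun j _ => abs_nonneg _)
      (Finset.mem_univ j)
    simp only [hNf]; linarith
  have hmu_le : ∀ k l, |xi k l * H l (x k)| ≤ Nf k := by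
    intro k l
    obtain ⟨h1, h2, h3, h4⟩ := hsums k
    rw [abs_of_nonneg (hmu0 k l)]
    have := Finset.single_le_sum (f := fun l => xi k l * H l (x k)) (fun l _ => hmu0 k l)
      (Finset.mem_univ l)
    simp only [hNf]; linarith
  have hnu_le : ∀ k l, |xi k l * G l (x k)| ≤ Nf k := by
    intro k l
    obtain ⟨h1, h2, h3, h4⟩ := hsums k
    rw [abs_of_nonneg (hnu0 k l)]
    have := Finset.single_le_sum (f := fun l => xi k l * G l (x k)) (fun l _ => hnu0 k l)
      (Finset.mem_univ l)
    simp only [hNf]; linarith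
  -- the bounded sequence of scaled multipliers
  set u : ℕ → ℝ × (Fin m → ℝ) × (Fin p → ℝ) × (Fin q → ℝ) × (Fin q → ℝ) := fun k =>
    (s k, fun i => s k * lam k i, fun j => s k * rho k j,
     fun l => s k * (xi k l * H l (x k)), fun l => s k * (xi k l * G l (x k))) with hu_def
  have hbnd : ∀ k, ‖u k‖ ≤ 1 := by
    intro k
    have h0 : ‖s k‖ ≤ 1 := by
      rw [Real.norm_eq_abs, abs_of_pos (hspos k)]
      calc s k = s k * 1 := (mul_one _).symm
      _ ≤ s k * Nf k := mul_le_mul_of_nonneg_left (hN1 k) (hspos k).le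
      _ = 1 := hsN k
    simp only [hu_def, Prod.norm_def]
    refine max_le h0 (max_le ?_ (max_le ?_ (max_le ?_ ?_))) <;>
      refine (pi_norm_le_iff_of_nonneg zero_le_one).mpr fun i => ?_ <;>
      rw [Real.norm_eq_abs]
    · exact habs k _ (hlam_le k i)
    · exact habs k _ (hrho_le k i)
    · exact habs k _ (hmu_le k i)
    · exact habs k _ (hnu_le k i)
  clear_value Nf s
  obtain ⟨⟨sb, Lb, Rb, Mb, Nb⟩, -, φ, hφmono, hu⟩ :=
    (isCompact_closedBall (0 : ℝ × (Fin m → ℝ) × (Fin p → ℝ) × (Fin q → ℝ) × (Fin q → ℝ))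
      1).tendsto_subseq (fun k => mem_closedBall_zero_iff.mpr (hbnd k))
  -- component convergences
  have hxφ : Filter.Tendsto (fun k => x (φ k)) Filter.atTop (nhds xb) :=
    hconv.comp hφmono.tendsto_atTop
  have htφ : Filter.Tendsto (fun k => t (φ k)) Filter.atTop (nhds 0) :=
    htlim.comp hφmono.tendsto_atTop
  have hsφ : Filter.Tendsto (fun k => s (φ k)) Filter.atTop (nhds sb) :=
    (continuous_fst.tendsto _).comp hu
  have hLφ : ∀ i, Filter.Tendsto (fun k => s (φ k) * lam (φ k) i) Filter.atTop (nhds (Lb i)) :=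
    fun i => (((continuous_apply i).comp (continuous_fst.comp continuous_snd)).tendsto _).comp hu
  have hRφ : ∀ j, Filter.Tendsto (fun k => s (φ k) * rho (φ k) j) Filter.atTop (nhds (Rb j)) :=
    fun j => (((continuous_apply j).comp
      (continuous_fst.comp (continuous_snd.comp continuous_snd))).tendsto _).comp hu
  have hMφ : ∀ l, Filter.Tendsto (fun k => s (φ k) * (xi (φ k) l * H l (x (φ k))))
      Filter.atTop (nhds (Mb l)) :=
    fun l => (((continuous_apply l).comp
      (continuous_fst.comp (continuous_snd.comp (continuous_snd.comp continuous_snd)))).tendsto _).comp hu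
  have hNφ : ∀ l, Filter.Tendsto (fun k => s (φ k) * (xi (φ k) l * G l (x (φ k))))
      Filter.atTop (nhds (Nb l)) :=
    fun l => (((continuous_apply l).comp
      (continuous_snd.comp (continuous_snd.comp (continuous_snd.comp continuous_snd)))).tendsto _).comp hu
  have hGx : ∀ l, Filter.Tendsto (fun k => G l (x (φ k))) Filter.atTop (nhds (G l xb)) :=
    fun l => ((hG l).continuous.tendsto xb).comp hxφ
  have hHx : ∀ l, Filter.Tendsto (fun k => H l (x (φ k))) Filter.atTop (nhds (H l xb)) :=
    fun l => ((hH l).continuous.tendsto xb).comp hxφ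
  -- signs of the limits
  have hsb0 : 0 ≤ sb := ge_of_tendsto' hsφ fun k => (hspos (φ k)).le
  have hLb0 : ∀ i, 0 ≤ Lb i := fun i =>
    ge_of_tendsto' (hLφ i) fun k => mul_nonneg (hspos (φ k)).le (hlam0 (φ k) i)
  have hMb0 : ∀ l, 0 ≤ Mb l := fun l =>
    ge_of_tendsto' (hMφ l) fun k => mul_nonneg (hspos (φ k)).le (hmu0 (φ k) l)
  have hNb0 : ∀ l, 0 ≤ Nb l := fun l =>
    ge_of_tendsto' (hNφ l) fun k => mul_nonneg (hspos (φ k)).le (hnu0 (φ k) l)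
  -- support conditions in the limit
  have hLsupp : ∀ i, g i xb ≠ 0 → Lb i = 0 := by
    intro i hi
    have hev : ∀ᶠ k in Filter.atTop, g i (x (φ k)) ≠ 0 :=
      (((hg i).continuous.tendsto xb).comp hxφ).eventually_ne hi
    refine tendsto_nhds_unique (hLφ i) (tendsto_const_nhds.congr' ?_)
    filter_upwards [hev] with k hk
    simp [hlamsupp (φ k) i hk]
  have hMsupp : ∀ l, ¬(G l xb = 0 ∧ 0 ≤ H l xb) → Mb l = 0 := by
    intro l hl
    refine tendsto_nhds_unique (hMφ l) ?_
    rcases lt_trichotomy (G l xb) 0 with hGb | hGb | hGb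
    · have hev : ∀ᶠ k in Filter.atTop, G l (x (φ k)) < 0 :=
        (hGx l).eventually_lt_const hGb
      refine tendsto_const_nhds.congr' ?_
      filter_upwards [hev] with k hk
      rcases hdich (φ k) l with h0 | ⟨hG1, _, _⟩
      · simp [h0]
      · linarith
    · have hHb : H l xb < 0 := by
        by_contra hc; push_neg at hc; exact hl ⟨hGb, hc⟩
      have hev : ∀ᶠ k in Filter.atTop, H l (x (φ k)) < 0 :=
        (hHx l).eventually_lt_const hHb
      refine tendsto_const_nhds.congr' ?_
      filter_upwards [hev] with k hk
      rcases hdich (φ k) l with h0 | ⟨_, hH1, _⟩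
      · simp [h0]
      · linarith
    · -- squeeze
      have hev : ∀ᶠ k in Filter.atTop, G l xb / 2 < G l (x (φ k)) :=
        (hGx l).eventually_const_lt (by linarith)
      have hub : ∀ᶠ k in Filter.atTop,
          s (φ k) * (xi (φ k) l * H l (x (φ k))) ≤ 4 / (G l xb) ^ 2 * t (φ k) := by
        filter_upwards [hev] with k hk
        rcases hdich (φ k) l with h0 | ⟨hG1, hH1, hGH⟩
        · simp only [h0, zero_mul, mul_zero]; have := (ht (φ k)).le; positivity
        · have hsnu : s (φ k) * (xi (φ k) l * G l (x (φ k))) ≤ 1 :=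
            le_trans (le_abs_self _) (habs (φ k) _ (hnu_le (φ k) l))
          have hsx : 0 ≤ s (φ k) * xi (φ k) l :=
            mul_nonneg (hspos (φ k)).le (hxi0 (φ k) l)
          have e1 : s (φ k) * xi (φ k) l * G l xb ≤ 2 := by nlinarith
          have e2 : H l (x (φ k)) * G l xb ≤ 2 * t (φ k) := by nlinarith
          have e3 := mul_le_mul e1 e2 (mul_nonneg hH1.le hGb.le) (by norm_num)
          have hGb2 : (0:ℝ) < (G l xb) ^ 2 := by positivity
          rw [div_mul_eq_mul_div, le_div_iff₀ hGb2]
          nlinarith [e3]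
      have hub0 : Filter.Tendsto (fun k => 4 / (G l xb) ^ 2 * t (φ k))
          Filter.atTop (nhds 0) := by
        have := htφ.const_mul (4 / (G l xb) ^ 2)
        simpa using this
      exact tendsto_of_tendsto_of_tendsto_of_le_of_le' tendsto_const_nhds hub0
        (Filter.Eventually.of_forall fun k =>
          mul_nonneg (hspos (φ k)).le (hmu0 (φ k) l)) hub
  have hNsupp : ∀ l, ¬(H l xb = 0 ∧ 0 ≤ G l xb) → Nb l = 0 := by
    intro l hl
    refine tendsto_nhds_unique (hNφ l) ?_
    rcases lt_trichotomy (H l xb) 0 with hHb | hHb | hHb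
    · have hev : ∀ᶠ k in Filter.atTop, H l (x (φ k)) < 0 :=
        (hHx l).eventually_lt_const hHb
      refine tendsto_const_nhds.congr' ?_
      filter_upwards [hev] with k hk
      rcases hdich (φ k) l with h0 | ⟨_, hH1, _⟩
      · simp [h0]
      · linarith
    · have hGb : G l xb < 0 := by
        by_contra hc; push_neg at hc; exact hl ⟨hHb, hc⟩
      have hev : ∀ᶠ k in Filter.atTop, G l (x (φ k)) < 0 :=
        (hGx l).eventually_lt_const hGb
      refine tendsto_const_nhds.congr' ?_
      filter_upwards [hev] with k hk
      rcases hdich (φ k) l with h0 | ⟨hG1, _, _⟩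
      · simp [h0]
      · linarith
    · have hev : ∀ᶠ k in Filter.atTop, H l xb / 2 < H l (x (φ k)) :=
        (hHx l).eventually_const_lt (by linarith)
      have hub : ∀ᶠ k in Filter.atTop,
          s (φ k) * (xi (φ k) l * G l (x (φ k))) ≤ 4 / (H l xb) ^ 2 * t (φ k) := by
        filter_upwards [hev] with k hk
        rcases hdich (φ k) l with h0 | ⟨hG1, hH1, hGH⟩
        · simp only [h0, zero_mul, mul_zero]; have := (ht (φ k)).le; positivity
        · have hsmu : s (φ k) * (xi (φ k) l * H l (x (φ k))) ≤ 1 :=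
            le_trans (le_abs_self _) (habs (φ k) _ (hmu_le (φ k) l))
          have hsx : 0 ≤ s (φ k) * xi (φ k) l :=
            mul_nonneg (hspos (φ k)).le (hxi0 (φ k) l)
          have e1 : s (φ k) * xi (φ k) l * H l xb ≤ 2 := by nlinarith
          have e2 : G l (x (φ k)) * H l xb ≤ 2 * t (φ k) := by nlinarith
          have e3 := mul_le_mul e1 e2 (mul_nonneg hG1.le hHb.le) (by norm_num)
          have hHb2 : (0:ℝ) < (H l xb) ^ 2 := by positivity
          rw [div_mul_eq_mul_div, le_div_iff₀ hHb2]
          nlinarith [e3]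
      have hub0 : Filter.Tendsto (fun k => 4 / (H l xb) ^ 2 * t (φ k))
          Filter.atTop (nhds 0) := by
        have := htφ.const_mul (4 / (H l xb) ^ 2)
        simpa using this
      exact tendsto_of_tendsto_of_tendsto_of_le_of_le' tendsto_const_nhds hub0
        (Filter.Eventually.of_forall fun k =>
          mul_nonneg (hspos (φ k)).le (hnu0 (φ k) l)) hub
  -- the normalization identity in the limit
  have hone : ∀ k, s k + (∑ i, s k * lam k i) + (∑ j, |s k * rho k j|)
      + (∑ l, s k * (xi k l * H l (x k))) + (∑ l, s k * (xi k l * G l (x k))) = 1 := by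
    intro k
    have h1 : (∑ j, |s k * rho k j|) = ∑ j, s k * |rho k j| :=
      Finset.sum_congr rfl fun j _ => by rw [abs_mul, abs_of_pos (hspos k)]
    rw [h1, ← Finset.mul_sum, ← Finset.mul_sum, ← Finset.mul_sum, ← Finset.mul_sum]
    have h2 := hsN k
    simp only [hNf] at h2
    linarith [h2]
  have honelim : sb + (∑ i, Lb i) + (∑ j, |Rb j|) + (∑ l, Mb l) + (∑ l, Nb l) = 1 := by
    have hT : Filter.Tendsto (fun k => s (φ k) + (∑ i, s (φ k) * lam (φ k) i)
        + (∑ j, |s (φ k) * rho (φ k) j|) + (∑ l, s (φ k) * (xi (φ k) l * H l (x (φ k))))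
        + (∑ l, s (φ k) * (xi (φ k) l * G l (x (φ k)))))
        Filter.atTop (nhds (sb + (∑ i, Lb i) + (∑ j, |Rb j|) + (∑ l, Mb l) + (∑ l, Nb l))) := by
      refine ((((hsφ.add ?_).add ?_).add ?_).add ?_)
      · exact tendsto_finset_sum _ fun i _ => hLφ i
      · exact tendsto_finset_sum _ fun j _ => (hRφ j).abs
      · exact tendsto_finset_sum _ fun l _ => hMφ l
      · exact tendsto_finset_sum _ fun l _ => hNφ l
    refine tendsto_nhds_unique hT ?_
    have : (fun k => s (φ k) + (∑ i, s (φ k) * lam (φ k) i)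
        + (∑ j, |s (φ k) * rho (φ k) j|) + (∑ l, s (φ k) * (xi (φ k) l * H l (x (φ k))))
        + (∑ l, s (φ k) * (xi (φ k) l * G l (x (φ k))))) = fun _ => (1:ℝ) :=
      funext fun k => hone (φ k)
    rw [this]
    exact tendsto_const_nhds
  -- scaled stationarity
  have heqs : ∀ k,
      s k • fderiv ℝ f (x k) + (∑ i, (s k * lam k i) • fderiv ℝ (g i) (x k))
        + (∑ j, (s k * rho k j) • fderiv ℝ (h j) (x k))
        + (∑ l, (s k * (xi k l * H l (x k))) • fderiv ℝ (G l) (x k))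
        + (∑ l, (s k * (xi k l * G l (x k))) • fderiv ℝ (H l) (x k)) = 0 := by
    intro k
    exact aux_scale (s k) (fderiv ℝ f (x k)) (lam k) (fun i => fderiv ℝ (g i) (x k))
      (rho k) (fun j => fderiv ℝ (h j) (x k)) (fun l => xi k l * H l (x k))
      (fun l => xi k l * G l (x k)) (fun l => fderiv ℝ (G l) (x k))
      (fun l => fderiv ℝ (H l) (x k)) (heq' k)
  -- limit of the stationarity equation
  have hEq0 : sb • fderiv ℝ f xb + (∑ i, Lb i • fderiv ℝ (g i) xb)
      + (∑ j, Rb j • fderiv ℝ (h j) xb) + (∑ l, Mb l • fderiv ℝ (G l) xb)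
      + (∑ l, Nb l • fderiv ℝ (H l) xb) = 0 := by
    have hBig : Filter.Tendsto (fun k =>
        s (φ k) • fderiv ℝ f (x (φ k))
        + (∑ i, (s (φ k) * lam (φ k) i) • fderiv ℝ (g i) (x (φ k)))
        + (∑ j, (s (φ k) * rho (φ k) j) • fderiv ℝ (h j) (x (φ k)))
        + (∑ l, (s (φ k) * (xi (φ k) l * H l (x (φ k)))) • fderiv ℝ (G l) (x (φ k)))
        + (∑ l, (s (φ k) * (xi (φ k) l * G l (x (φ k)))) • fderiv ℝ (H l) (x (φ k))))
        Filter.atTop (nhds (sb • fderiv ℝ f xb + (∑ i, Lb i • fderiv ℝ (g i) xb)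
          + (∑ j, Rb j • fderiv ℝ (h j) xb) + (∑ l, Mb l • fderiv ℝ (G l) xb)
          + (∑ l, Nb l • fderiv ℝ (H l) xb))) := by
      refine Filter.Tendsto.add (Filter.Tendsto.add (Filter.Tendsto.add
        (Filter.Tendsto.add ?_ ?_) ?_) ?_) ?_
      · exact hsφ.smul (((hf.continuous_fderiv one_ne_zero).tendsto xb).comp hxφ)
      · exact tendsto_finset_sum _ fun i _ =>
          (hLφ i).smul ((((hg i).continuous_fderiv one_ne_zero).tendsto xb).comp hxφ)
      · exact tendsto_finset_sum _ fun j _ =>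
          (hRφ j).smul ((((hh j).continuous_fderiv one_ne_zero).tendsto xb).comp hxφ)
      · exact tendsto_finset_sum _ fun l _ =>
          (hMφ l).smul ((((hG l).continuous_fderiv one_ne_zero).tendsto xb).comp hxφ)
      · exact tendsto_finset_sum _ fun l _ =>
          (hNφ l).smul ((((hH l).continuous_fderiv one_ne_zero).tendsto xb).comp hxφ)
    refine tendsto_nhds_unique hBig ?_
    have : (fun k =>
        s (φ k) • fderiv ℝ f (x (φ k))
        + (∑ i, (s (φ k) * lam (φ k) i) • fderiv ℝ (g i) (x (φ k)))
        + (∑ j, (s (φ k) * rho (φ k) j) • fderiv ℝ (h j) (x (φ k)))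
        + (∑ l, (s (φ k) * (xi (φ k) l * H l (x (φ k)))) • fderiv ℝ (G l) (x (φ k)))
        + (∑ l, (s (φ k) * (xi (φ k) l * G l (x (φ k)))) • fderiv ℝ (H l) (x (φ k))))
        = fun _ => (0 : (Fin n → ℝ) →L[ℝ] ℝ) := funext fun k => heqs (φ k)
    rw [this]
    exact tendsto_const_nhds
  -- case distinction on sb
  rcases eq_or_lt_of_le hsb0 with hc | hc
  · -- sb = 0 : contradiction with MFCQ
    exfalso
    have h0 : (∑ i, Lb i • fderiv ℝ (g i) xb) + (∑ j, Rb j • fderiv ℝ (h j) xb)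
        + (∑ l, Mb l • fderiv ℝ (G l) xb) + (∑ l, Nb l • fderiv ℝ (H l) xb) = 0 := by
      have := hEq0
      rw [← hc, zero_smul, zero_add] at this
      exact this
    obtain ⟨hL0, hR0, hM0, hN0⟩ := hmfcq Lb Rb Mb Nb hLb0 hLsupp hMb0 hMsupp hNb0 hNsupp h0
    simp only [hL0, hR0, hM0, hN0, abs_zero, Finset.sum_const_zero, add_zero, ← hc,
      zero_add] at honelim
    exact zero_ne_one honelim
  · -- sb > 0 : W-stationarity
    refine ⟨fun i => sb⁻¹ * Lb i, fun j => sb⁻¹ * Rb j, fun l => sb⁻¹ * Mb l,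
      fun l => sb⁻¹ * Nb l, fun i => mul_nonneg (inv_nonneg.mpr hc.le) (hLb0 i),
      fun i hi => by show sb⁻¹ * Lb i = 0; rw [hLsupp i hi, mul_zero],
      fun l => mul_nonneg (inv_nonneg.mpr hc.le) (hMb0 l),
      fun l hl => by show sb⁻¹ * Mb l = 0; rw [hMsupp l hl, mul_zero],
      fun l => mul_nonneg (inv_nonneg.mpr hc.le) (hNb0 l),
      fun l hl => by show sb⁻¹ * Nb l = 0; rw [hNsupp l hl, mul_zero], ?_⟩
    have h2 := aux_scale sb⁻¹ (sb • fderiv ℝ f xb) Lb (fun i => fderiv ℝ (g i) xb)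
      Rb (fun j => fderiv ℝ (h j) xb) Mb Nb (fun l => fderiv ℝ (G l) xb)
      (fun l => fderiv ℝ (H l) xb) hEq0
    rw [smul_smul, inv_mul_cancel₀ hc.ne', one_smul] at h2
    exact h2
end
end

section
/- Let x̄ ∈ X be a feasible point of (MPOC) at which MPOC-MFCQ holds. Then there exists a neighborhood U ⊆ ℝⁿ of x̄ such that for every t > 0 and every x ∈ X(φ_KS^t) ∩ U, MFCQ holds for P(φ_KS^t) at x, i.e., the only coefficients λ_i ≥ 0 (i ∈ I^g(x)), ξ_l ≥ 0 (l ∈ I^{φ_KS^t}(x)), ρ_j ∈ ℝ (j ∈ P) with 0 = Σ λ_i ∇g_i(x) + Σ ρ_j ∇h_j(x) + Σ_{l ∈ I^{φ_KS^t}(x)} ξ_l (H_l(x) ∇G_l(x) + G_l(x) ∇H_l(x)) are all zero. -/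
open Filter Topology

section AuxKS

variable {m p q : ℕ} {D : Type*} [NormedAddCommGroup D] [NormedSpace ℝ D]

/-- coefficient space -/
abbrev CoefKS (m p q : ℕ) := (Fin m → ℝ) × (Fin p → ℝ) × (Fin q → ℝ) × (Fin q → ℝ)

def combVKS (a : Fin m → D) (b : Fin p → D) (A B : Fin q → D) (v : CoefKS m p q) : D :=
  (∑ i, v.1 i • a i) + (∑ j, v.2.1 j • b j) + (∑ l, v.2.2.1 l • A l) + (∑ l, v.2.2.2 l • B l)

def sOneKS (v : CoefKS m p q) : ℝ :=
  (∑ i, |v.1 i|) + (∑ j, |v.2.1 j|) + (∑ l, |v.2.2.1 l|) + (∑ l, |v.2.2.2 l|)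

lemma sOneKS_nonneg (v : CoefKS m p q) : 0 ≤ sOneKS v := by
  have h1 : (0:ℝ) ≤ ∑ i, |v.1 i| := Finset.sum_nonneg fun i _ => abs_nonneg _
  have h2 : (0:ℝ) ≤ ∑ j, |v.2.1 j| := Finset.sum_nonneg fun j _ => abs_nonneg _
  have h3 : (0:ℝ) ≤ ∑ l, |v.2.2.1 l| := Finset.sum_nonneg fun l _ => abs_nonneg _
  have h4 : (0:ℝ) ≤ ∑ l, |v.2.2.2 l| := Finset.sum_nonneg fun l _ => abs_nonneg _
  unfold sOneKS; linarith

lemma abs_fst_le_sOneKS (v : CoefKS m p q) (i : Fin m) : |v.1 i| ≤ sOneKS v := by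
  have h1 : |v.1 i| ≤ ∑ i, |v.1 i| :=
    Finset.single_le_sum (fun i _ => abs_nonneg (v.1 i)) (Finset.mem_univ i)
  have h2 : (0:ℝ) ≤ ∑ j, |v.2.1 j| := Finset.sum_nonneg fun j _ => abs_nonneg _
  have h3 : (0:ℝ) ≤ ∑ l, |v.2.2.1 l| := Finset.sum_nonneg fun l _ => abs_nonneg _
  have h4 : (0:ℝ) ≤ ∑ l, |v.2.2.2 l| := Finset.sum_nonneg fun l _ => abs_nonneg _
  unfold sOneKS; linarith

lemma abs_snd_le_sOneKS (v : CoefKS m p q) (j : Fin p) : |v.2.1 j| ≤ sOneKS v := by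
  have h1 : |v.2.1 j| ≤ ∑ j, |v.2.1 j| :=
    Finset.single_le_sum (fun j _ => abs_nonneg (v.2.1 j)) (Finset.mem_univ j)
  have h2 : (0:ℝ) ≤ ∑ i, |v.1 i| := Finset.sum_nonneg fun i _ => abs_nonneg _
  have h3 : (0:ℝ) ≤ ∑ l, |v.2.2.1 l| := Finset.sum_nonneg fun l _ => abs_nonneg _
  have h4 : (0:ℝ) ≤ ∑ l, |v.2.2.2 l| := Finset.sum_nonneg fun l _ => abs_nonneg _
  unfold sOneKS; linarith

lemma abs_mu_le_sOneKS (v : CoefKS m p q) (l : Fin q) : |v.2.2.1 l| ≤ sOneKS v := by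
  have h1 : |v.2.2.1 l| ≤ ∑ l, |v.2.2.1 l| :=
    Finset.single_le_sum (fun l _ => abs_nonneg (v.2.2.1 l)) (Finset.mem_univ l)
  have h2 : (0:ℝ) ≤ ∑ i, |v.1 i| := Finset.sum_nonneg fun i _ => abs_nonneg _
  have h3 : (0:ℝ) ≤ ∑ j, |v.2.1 j| := Finset.sum_nonneg fun j _ => abs_nonneg _
  have h4 : (0:ℝ) ≤ ∑ l, |v.2.2.2 l| := Finset.sum_nonneg fun l _ => abs_nonneg _
  unfold sOneKS; linarith

lemma abs_nu_le_sOneKS (v : CoefKS m p q) (l : Fin q) : |v.2.2.2 l| ≤ sOneKS v := by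
  have h1 : |v.2.2.2 l| ≤ ∑ l, |v.2.2.2 l| :=
    Finset.single_le_sum (fun l _ => abs_nonneg (v.2.2.2 l)) (Finset.mem_univ l)
  have h2 : (0:ℝ) ≤ ∑ i, |v.1 i| := Finset.sum_nonneg fun i _ => abs_nonneg _
  have h3 : (0:ℝ) ≤ ∑ j, |v.2.1 j| := Finset.sum_nonneg fun j _ => abs_nonneg _
  have h4 : (0:ℝ) ≤ ∑ l, |v.2.2.1 l| := Finset.sum_nonneg fun l _ => abs_nonneg _
  unfold sOneKS; linarith

lemma sOneKS_continuous : Continuous (sOneKS (m := m) (p := p) (q := q)) := by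
  unfold sOneKS
  fun_prop

lemma combVKS_continuous (a : Fin m → D) (b : Fin p → D) (A B : Fin q → D) :
    Continuous (combVKS a b A B) := by
  unfold combVKS
  fun_prop

lemma sOneKS_smul (r : ℝ) (hr : 0 ≤ r) (v : CoefKS m p q) : sOneKS (r • v) = r * sOneKS v := by
  unfold sOneKS
  simp only [Prod.smul_fst, Prod.smul_snd, Pi.smul_apply, smul_eq_mul, abs_mul, abs_of_nonneg hr,
    ← Finset.mul_sum]
  ring

lemma combVKS_smul (a : Fin m → D) (b : Fin p → D) (A B : Fin q → D) (r : ℝ) (v : CoefKS m p q) :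
    combVKS a b A B (r • v) = r • combVKS a b A B v := by
  unfold combVKS
  simp only [Prod.smul_fst, Prod.smul_snd, Pi.smul_apply, smul_eq_mul, ← smul_smul, smul_add,
    Finset.smul_sum]

lemma exists_pos_lb_KS (a : Fin m → D) (b : Fin p → D) (A B : Fin q → D)
    (Sg : Fin m → Prop) (SG SH : Fin q → Prop)
    (hpli : ∀ v : CoefKS m p q, (∀ i, 0 ≤ v.1 i) → (∀ i, ¬ Sg i → v.1 i = 0) →
      (∀ l, 0 ≤ v.2.2.1 l) → (∀ l, ¬ SG l → v.2.2.1 l = 0) →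
      (∀ l, 0 ≤ v.2.2.2 l) → (∀ l, ¬ SH l → v.2.2.2 l = 0) →
      combVKS a b A B v = 0 → v = 0) :
    ∃ c > 0, ∀ v : CoefKS m p q, (∀ i, 0 ≤ v.1 i) → (∀ i, ¬ Sg i → v.1 i = 0) →
      (∀ l, 0 ≤ v.2.2.1 l) → (∀ l, ¬ SG l → v.2.2.1 l = 0) →
      (∀ l, 0 ≤ v.2.2.2 l) → (∀ l, ¬ SH l → v.2.2.2 l = 0) →
      c * sOneKS v ≤ ‖combVKS a b A B v‖ := by
  classical
  set Adm : Set (CoefKS m p q) :=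
    {v | (∀ i, 0 ≤ v.1 i) ∧ (∀ i, ¬ Sg i → v.1 i = 0) ∧ (∀ l, 0 ≤ v.2.2.1 l) ∧
      (∀ l, ¬ SG l → v.2.2.1 l = 0) ∧ (∀ l, 0 ≤ v.2.2.2 l) ∧ (∀ l, ¬ SH l → v.2.2.2 l = 0)}
    with hAdm
  -- Adm is scale invariant under nonneg scaling
  have hAdmScale : ∀ r : ℝ, 0 ≤ r → ∀ v ∈ Adm, r • v ∈ Adm := by
    rintro r hr v ⟨h1, h2, h3, h4, h5, h6⟩
    refine ⟨fun i => ?_, fun i hi => ?_, fun l => ?_, fun l hl => ?_, fun l => ?_, fun l hl => ?_⟩ <;>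
      simp only [Prod.smul_fst, Prod.smul_snd, Pi.smul_apply, smul_eq_mul]
    · exact mul_nonneg hr (h1 i)
    · rw [h2 i hi, mul_zero]
    · exact mul_nonneg hr (h3 l)
    · rw [h4 l hl, mul_zero]
    · exact mul_nonneg hr (h5 l)
    · rw [h6 l hl, mul_zero]
  have hAdmClosed : IsClosed Adm := by
    have e : {v : CoefKS m p q | (∀ i, 0 ≤ v.1 i) ∧ (∀ i, ¬ Sg i → v.1 i = 0) ∧
        (∀ l, 0 ≤ v.2.2.1 l) ∧ (∀ l, ¬ SG l → v.2.2.1 l = 0) ∧ (∀ l, 0 ≤ v.2.2.2 l) ∧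
        (∀ l, ¬ SH l → v.2.2.2 l = 0)} =
        (⋂ i, {v : CoefKS m p q | 0 ≤ v.1 i}) ∩ (⋂ i, {v : CoefKS m p q | ¬ Sg i → v.1 i = 0}) ∩
        (⋂ l, {v : CoefKS m p q | 0 ≤ v.2.2.1 l}) ∩
        (⋂ l, {v : CoefKS m p q | ¬ SG l → v.2.2.1 l = 0}) ∩
        (⋂ l, {v : CoefKS m p q | 0 ≤ v.2.2.2 l}) ∩
        (⋂ l, {v : CoefKS m p q | ¬ SH l → v.2.2.2 l = 0}) := by
      ext v
      simp only [Set.mem_setOf_eq, Set.mem_inter_iff, Set.mem_iInter]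
      tauto
    rw [hAdm, e]
    have c1 : Continuous fun v : CoefKS m p q => v.1 := continuous_fst
    have c3 : Continuous fun v : CoefKS m p q => v.2.2.1 := continuous_fst.comp
      (continuous_snd.comp continuous_snd)
    have c4 : Continuous fun v : CoefKS m p q => v.2.2.2 := continuous_snd.comp
      (continuous_snd.comp continuous_snd)
    refine (((((IsClosed.inter ?_ ?_).inter ?_).inter ?_).inter ?_).inter ?_)
    · exact isClosed_iInter fun i => isClosed_le continuous_const ((continuous_apply i).comp c1)
    · refine isClosed_iInter fun i => ?_
      by_cases hi : Sg i
      · simp only [hi, not_true_eq_false, false_implies, Set.setOf_true]; exact isClosed_univ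
      · simp only [hi, not_false_eq_true, true_implies]
        exact isClosed_eq ((continuous_apply i).comp c1) continuous_const
    · exact isClosed_iInter fun l => isClosed_le continuous_const ((continuous_apply l).comp c3)
    · refine isClosed_iInter fun l => ?_
      by_cases hl : SG l
      · simp only [hl, not_true_eq_false, false_implies, Set.setOf_true]; exact isClosed_univ
      · simp only [hl, not_false_eq_true, true_implies]
        exact isClosed_eq ((continuous_apply l).comp c3) continuous_const
    · exact isClosed_iInter fun l => isClosed_le continuous_const ((continuous_apply l).comp c4)
    · refine isClosed_iInter fun l => ?_
      by_cases hl : SH l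
      · simp only [hl, not_true_eq_false, false_implies, Set.setOf_true]; exact isClosed_univ
      · simp only [hl, not_false_eq_true, true_implies]
        exact isClosed_eq ((continuous_apply l).comp c4) continuous_const
  set K : Set (CoefKS m p q) := Adm ∩ {v | sOneKS v = 1} with hK
  have hKclosed : IsClosed K :=
    hAdmClosed.inter (isClosed_eq sOneKS_continuous continuous_const)
  have hKsub : K ⊆ Metric.closedBall 0 1 := by
    rintro v ⟨_, hv1⟩
    rw [Metric.mem_closedBall, dist_zero_right]
    have h1 : ‖v.1‖ ≤ 1 := by
      refine (pi_norm_le_iff_of_nonneg zero_le_one).2 fun i => ?_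
      rw [Real.norm_eq_abs]
      exact le_trans (abs_fst_le_sOneKS v i) (le_of_eq hv1)
    have h2 : ‖v.2.1‖ ≤ 1 := by
      refine (pi_norm_le_iff_of_nonneg zero_le_one).2 fun j => ?_
      rw [Real.norm_eq_abs]
      exact le_trans (abs_snd_le_sOneKS v j) (le_of_eq hv1)
    have h3 : ‖v.2.2.1‖ ≤ 1 := by
      refine (pi_norm_le_iff_of_nonneg zero_le_one).2 fun l => ?_
      rw [Real.norm_eq_abs]
      exact le_trans (abs_mu_le_sOneKS v l) (le_of_eq hv1)
    have h4 : ‖v.2.2.2‖ ≤ 1 := by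
      refine (pi_norm_le_iff_of_nonneg zero_le_one).2 fun l => ?_
      rw [Real.norm_eq_abs]
      exact le_trans (abs_nu_le_sOneKS v l) (le_of_eq hv1)
    calc ‖v‖ = max ‖v.1‖ (max ‖v.2.1‖ (max ‖v.2.2.1‖ ‖v.2.2.2‖)) := rfl
      _ ≤ 1 := by
        exact max_le h1 (max_le h2 (max_le h3 h4))
  have hKcompact : IsCompact K :=
    (isCompact_closedBall (0 : CoefKS m p q) 1).of_isClosed_subset hKclosed hKsub
  -- the normalized element
  have hnorm : ∀ v : CoefKS m p q, v ∈ Adm → sOneKS v ≠ 0 → (sOneKS v)⁻¹ • v ∈ K := by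
    intro v hv hs
    have hspos : 0 < sOneKS v := lt_of_le_of_ne (sOneKS_nonneg v) (Ne.symm hs)
    refine ⟨hAdmScale _ (le_of_lt (inv_pos.2 hspos)) v hv, ?_⟩
    simp only [Set.mem_setOf_eq]
    rw [sOneKS_smul _ (le_of_lt (inv_pos.2 hspos))]
    field_simp
  by_cases hKne : K.Nonempty
  · obtain ⟨v₀, hv₀K, hmin⟩ := hKcompact.exists_isMinOn hKne
      ((combVKS_continuous a b A B).norm.continuousOn)
    have hc0 : 0 < ‖combVKS a b A B v₀‖ := by
      rcases lt_or_eq_of_le (norm_nonneg (combVKS a b A B v₀)) with h | h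
      · exact h
      · exfalso
        obtain ⟨⟨a1, a2, a3, a4, a5, a6⟩, hs1⟩ := hv₀K
        have : v₀ = 0 := hpli v₀ a1 a2 a3 a4 a5 a6 (norm_eq_zero.1 h.symm)
        rw [this] at hs1
        simp only [Set.mem_setOf_eq] at hs1
        have : sOneKS (0 : CoefKS m p q) = 0 := by
          unfold sOneKS; simp
        rw [this] at hs1
        norm_num at hs1
    refine ⟨‖combVKS a b A B v₀‖, hc0, ?_⟩
    intro v a1 a2 a3 a4 a5 a6
    have hvAdm : v ∈ Adm := ⟨a1, a2, a3, a4, a5, a6⟩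
    by_cases hs : sOneKS v = 0
    · rw [hs, mul_zero]; exact norm_nonneg _
    · have hspos : 0 < sOneKS v := lt_of_le_of_ne (sOneKS_nonneg v) (Ne.symm hs)
      have hw := hnorm v hvAdm hs
      have hle := hmin hw
      simp only [Set.mem_setOf_eq] at hle
      rw [combVKS_smul, norm_smul, Real.norm_eq_abs, abs_of_nonneg (le_of_lt (inv_pos.2 hspos))]
        at hle
      calc ‖combVKS a b A B v₀‖ * sOneKS v ≤ ((sOneKS v)⁻¹ * ‖combVKS a b A B v‖) * sOneKS v :=
            mul_le_mul_of_nonneg_right hle (le_of_lt hspos)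
        _ = ‖combVKS a b A B v‖ := by field_simp
  · refine ⟨1, one_pos, ?_⟩
    intro v a1 a2 a3 a4 a5 a6
    have hvAdm : v ∈ Adm := ⟨a1, a2, a3, a4, a5, a6⟩
    by_cases hs : sOneKS v = 0
    · rw [hs, mul_zero]; exact norm_nonneg _
    · exact absurd ⟨_, hnorm v hvAdm hs⟩ hKne

end AuxKS
set_option maxHeartbeats 1000000


noncomputable section

open Filter Topology

variable {n m p q : ℕ}

/-- Under MPOC-MFCQ, standard MFCQ holds for the relaxed problems P(φ_KS^t) at all
feasible points in a neighborhood of the reference point, uniformly in `t > 0`. -/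
theorem regularity_offsetKS {n m p q : ℕ} (f : (Fin n → ℝ) → ℝ)
    (g : Fin m → (Fin n → ℝ) → ℝ) (h : Fin p → (Fin n → ℝ) → ℝ)
    (G H : Fin q → (Fin n → ℝ) → ℝ)
    (hf : ContDiff ℝ 1 f) (hg : ∀ i, ContDiff ℝ 1 (g i)) (hh : ∀ j, ContDiff ℝ 1 (h j))
    (hG : ∀ l, ContDiff ℝ 1 (G l)) (hH : ∀ l, ContDiff ℝ 1 (H l))
    (xb : Fin n → ℝ) (hxb : xb ∈ feasMPOC g h G H) (hmfcq : MPOC_MFCQ g h G H xb) :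
    ∃ U ∈ nhds xb, ∀ t : ℝ, 0 < t → ∀ x ∈ relFeas g h G H phiKSt t ∩ U,
      ∀ (lam : Fin m → ℝ) (rho : Fin p → ℝ) (xi : Fin q → ℝ),
        (∀ i, 0 ≤ lam i) → (∀ i, g i x ≠ 0 → lam i = 0) →
        (∀ l, 0 ≤ xi l) → (∀ l, phiKSt t (G l x, H l x) ≠ 0 → xi l = 0) →
        ((∑ i, lam i • fderiv ℝ (g i) x) + (∑ j, rho j • fderiv ℝ (h j) x)
          + (∑ l, xi l • (H l x • fderiv ℝ (G l) x + G l x • fderiv ℝ (H l) x)) = 0) →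
        (∀ i, lam i = 0) ∧ (∀ j, rho j = 0) ∧ (∀ l, xi l = 0) := by
  classical
  obtain ⟨hgxb, hhxb, hGHxb⟩ := hxb
  -- gradients at the reference point
  set a : Fin m → ((Fin n → ℝ) →L[ℝ] ℝ) := fun i => fderiv ℝ (g i) xb with ha
  set b : Fin p → ((Fin n → ℝ) →L[ℝ] ℝ) := fun j => fderiv ℝ (h j) xb with hb
  set A : Fin q → ((Fin n → ℝ) →L[ℝ] ℝ) := fun l => fderiv ℝ (G l) xb with hA
  set B : Fin q → ((Fin n → ℝ) →L[ℝ] ℝ) := fun l => fderiv ℝ (H l) xb with hB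
  have hpli : ∀ v : CoefKS m p q, (∀ i, 0 ≤ v.1 i) → (∀ i, ¬ (g i xb = 0) → v.1 i = 0) →
      (∀ l, 0 ≤ v.2.2.1 l) → (∀ l, ¬ (G l xb = 0 ∧ 0 ≤ H l xb) → v.2.2.1 l = 0) →
      (∀ l, 0 ≤ v.2.2.2 l) → (∀ l, ¬ (H l xb = 0 ∧ 0 ≤ G l xb) → v.2.2.2 l = 0) →
      combVKS a b A B v = 0 → v = 0 := by
    intro v h1 h2 h3 h4 h5 h6 hsum
    have hsum' : (∑ i, v.1 i • fderiv ℝ (g i) xb) + (∑ j, v.2.1 j • fderiv ℝ (h j) xb)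
        + (∑ l, v.2.2.1 l • fderiv ℝ (G l) xb) + (∑ l, v.2.2.2 l • fderiv ℝ (H l) xb) = 0 := hsum
    obtain ⟨z1, z2, z3, z4⟩ := hmfcq v.1 v.2.1 v.2.2.1 v.2.2.2 h1 h2 h3 h4 h5 h6 hsum'
    exact Prod.ext (funext z1) (Prod.ext (funext z2) (Prod.ext (funext z3) (funext z4)))
  obtain ⟨c, hc, hlb⟩ := exists_pos_lb_KS a b A B (fun i => g i xb = 0)
    (fun l => G l xb = 0 ∧ 0 ≤ H l xb) (fun l => H l xb = 0 ∧ 0 ≤ G l xb) hpli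
  set ε : ℝ := c / 4 with hεdef
  have hε : 0 < ε := by positivity
  set εq : ℝ := c / (4 * ((q : ℝ) + 1)) with hεqdef
  have hεq : 0 < εq := by positivity
  set δG : Fin q → ℝ := fun l => (εq * H l xb / 2) / (‖B l‖ + ε + 1) with hδG
  set δH : Fin q → ℝ := fun l => (εq * G l xb / 2) / (‖A l‖ + ε + 1) with hδH
  -- the neighborhood conditions
  have Ev1 : ∀ᶠ x in nhds xb, ∀ i, g i xb < 0 → g i x < 0 := by
    rw [eventually_all]
    intro i
    by_cases hi : g i xb < 0
    · exact (((hg i).continuous.tendsto xb).eventually_lt_const hi).mono fun x hx _ => hx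
    · exact Filter.Eventually.of_forall fun x hx => absurd hx hi
  have Ev2 : ∀ᶠ x in nhds xb, ∀ l, G l xb < 0 → G l x < 0 := by
    rw [eventually_all]
    intro l
    by_cases hl : G l xb < 0
    · exact (((hG l).continuous.tendsto xb).eventually_lt_const hl).mono fun x hx _ => hx
    · exact Filter.Eventually.of_forall fun x hx => absurd hx hl
  have Ev3 : ∀ᶠ x in nhds xb, ∀ l, H l xb < 0 → H l x < 0 := by
    rw [eventually_all]
    intro l
    by_cases hl : H l xb < 0
    · exact (((hH l).continuous.tendsto xb).eventually_lt_const hl).mono fun x hx _ => hx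
    · exact Filter.Eventually.of_forall fun x hx => absurd hx hl
  have Ev4 : ∀ᶠ x in nhds xb, ∀ i, ‖fderiv ℝ (g i) x - a i‖ < ε := by
    rw [eventually_all]
    intro i
    have hcont : Continuous fun x => ‖fderiv ℝ (g i) x - a i‖ :=
      (((hg i).continuous_fderiv one_ne_zero).sub continuous_const).norm
    exact (hcont.tendsto xb).eventually_lt_const (by simp [ha, hε])
  have Ev5 : ∀ᶠ x in nhds xb, ∀ j, ‖fderiv ℝ (h j) x - b j‖ < ε := by
    rw [eventually_all]
    intro j
    have hcont : Continuous fun x => ‖fderiv ℝ (h j) x - b j‖ :=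
      (((hh j).continuous_fderiv one_ne_zero).sub continuous_const).norm
    exact (hcont.tendsto xb).eventually_lt_const (by simp [hb, hε])
  have Ev6 : ∀ᶠ x in nhds xb, ∀ l, ‖fderiv ℝ (G l) x - A l‖ < ε := by
    rw [eventually_all]
    intro l
    have hcont : Continuous fun x => ‖fderiv ℝ (G l) x - A l‖ :=
      (((hG l).continuous_fderiv one_ne_zero).sub continuous_const).norm
    exact (hcont.tendsto xb).eventually_lt_const (by simp [hA, hε])
  have Ev7 : ∀ᶠ x in nhds xb, ∀ l, ‖fderiv ℝ (H l) x - B l‖ < ε := by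
    rw [eventually_all]
    intro l
    have hcont : Continuous fun x => ‖fderiv ℝ (H l) x - B l‖ :=
      (((hH l).continuous_fderiv one_ne_zero).sub continuous_const).norm
    exact (hcont.tendsto xb).eventually_lt_const (by simp [hB, hε])
  have Ev8 : ∀ᶠ x in nhds xb, ∀ l, (G l xb = 0 ∧ 0 < H l xb) →
      (H l xb / 2 < H l x ∧ |G l x| < δG l) := by
    rw [eventually_all]
    intro l
    by_cases hl : G l xb = 0 ∧ 0 < H l xb
    · have hδpos : 0 < δG l := by
        have h1 : (0:ℝ) < εq * H l xb / 2 := by linarith only [mul_pos hεq hl.2]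
        have h2 : (0:ℝ) < ‖B l‖ + ε + 1 := by linarith only [hε, norm_nonneg (B l)]
        simp only [hδG]
        exact div_pos h1 h2
      have e1 : ∀ᶠ x in nhds xb, H l xb / 2 < H l x :=
        ((hH l).continuous.tendsto xb).eventually_const_lt (half_lt_self hl.2)
      have e2 : ∀ᶠ x in nhds xb, |G l x| < δG l := by
        have hcont : Continuous fun x => |G l x| := (hG l).continuous.abs
        have hval : |G l xb| < δG l := by rw [hl.1]; simpa using hδpos
        exact (hcont.tendsto xb).eventually_lt_const hval
      exact (e1.and e2).mono fun x hx _ => hx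
    · exact Filter.Eventually.of_forall fun x hx => absurd hx hl
  have Ev9 : ∀ᶠ x in nhds xb, ∀ l, (H l xb = 0 ∧ 0 < G l xb) →
      (G l xb / 2 < G l x ∧ |H l x| < δH l) := by
    rw [eventually_all]
    intro l
    by_cases hl : H l xb = 0 ∧ 0 < G l xb
    · have hδpos : 0 < δH l := by
        have h1 : (0:ℝ) < εq * G l xb / 2 := by linarith only [mul_pos hεq hl.2]
        have h2 : (0:ℝ) < ‖A l‖ + ε + 1 := by linarith only [hε, norm_nonneg (A l)]
        simp only [hδH]
        exact div_pos h1 h2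
      have e1 : ∀ᶠ x in nhds xb, G l xb / 2 < G l x :=
        ((hG l).continuous.tendsto xb).eventually_const_lt (half_lt_self hl.2)
      have e2 : ∀ᶠ x in nhds xb, |H l x| < δH l := by
        have hcont : Continuous fun x => |H l x| := (hH l).continuous.abs
        have hval : |H l xb| < δH l := by rw [hl.1]; simpa using hδpos
        exact (hcont.tendsto xb).eventually_lt_const hval
      exact (e1.and e2).mono fun x hx _ => hx
    · exact Filter.Eventually.of_forall fun x hx => absurd hx hl
  have Ev := Ev1.and (Ev2.and (Ev3.and (Ev4.and (Ev5.and (Ev6.and (Ev7.and (Ev8.and Ev9)))))))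
  refine ⟨_, Ev, ?_⟩
  rintro t ht x ⟨⟨hgx, hhx, hphix⟩, hxU⟩ lam rho xi hlam0 hlamsup hxi0 hxisup heq
  obtain ⟨hU1, hU2, hU3, hU4, hU5, hU6, hU7, hU8, hU9⟩ := hxU
  -- active or-constraints have both components positive
  have hact : ∀ l, xi l ≠ 0 → 0 < G l x ∧ 0 < H l x := by
    intro l hne
    have hphi0 : phiKSt t (G l x, H l x) = 0 := by
      by_contra hcon
      exact hne (hxisup l hcon)
    have hphi : phiKS (G l x, H l x) = t := by
      have h0 : phiKS (G l x, H l x) - t = 0 := hphi0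
      linarith only [h0]
    simp only [phiKS] at hphi
    split_ifs at hphi with hsgn
    · constructor
      · nlinarith only [hphi, hsgn, ht]
      · nlinarith only [hphi, hsgn, ht]
    · nlinarith only [hphi, ht, sq_nonneg (G l x), sq_nonneg (H l x)]
  have hactb : ∀ l, xi l ≠ 0 → 0 ≤ G l xb ∧ 0 ≤ H l xb := by
    intro l hne
    obtain ⟨hGx, hHx⟩ := hact l hne
    constructor
    · by_contra hcon
      push_neg at hcon
      exact absurd (hU2 l hcon) (not_lt.2 hGx.le)
    · by_contra hcon
      push_neg at hcon
      exact absurd (hU3 l hcon) (not_lt.2 hHx.le)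
  -- the transported multipliers
  set mu : Fin q → ℝ := fun l => if G l xb = 0 ∧ 0 ≤ H l xb then xi l * H l x else 0 with hmu
  set nu : Fin q → ℝ := fun l => if H l xb = 0 ∧ 0 ≤ G l xb then xi l * G l x else 0 with hnu
  set v : CoefKS m p q := (lam, rho, mu, nu) with hv
  have a2 : ∀ i, ¬ (g i xb = 0) → lam i = 0 := by
    intro i hi
    have : g i xb < 0 := lt_of_le_of_ne (hgxb i) hi
    exact hlamsup i (ne_of_lt (hU1 i this))
  have a3 : ∀ l, 0 ≤ mu l := by
    intro l
    simp only [hmu]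
    by_cases hl : G l xb = 0 ∧ 0 ≤ H l xb
    · rw [if_pos hl]
      rcases eq_or_ne (xi l) 0 with hz | hz
      · rw [hz, zero_mul]
      · exact mul_nonneg (hxi0 l) (hact l hz).2.le
    · rw [if_neg hl]
  have a4 : ∀ l, ¬ (G l xb = 0 ∧ 0 ≤ H l xb) → mu l = 0 := by
    intro l hl; simp only [hmu]; exact if_neg hl
  have a5 : ∀ l, 0 ≤ nu l := by
    intro l
    simp only [hnu]
    by_cases hl : H l xb = 0 ∧ 0 ≤ G l xb
    · rw [if_pos hl]
      rcases eq_or_ne (xi l) 0 with hz | hz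
      · rw [hz, zero_mul]
      · exact mul_nonneg (hxi0 l) (hact l hz).1.le
    · rw [if_neg hl]
  have a6 : ∀ l, ¬ (H l xb = 0 ∧ 0 ≤ G l xb) → nu l = 0 := by
    intro l hl; simp only [hnu]; exact if_neg hl
  have hlow : c * sOneKS v ≤ ‖combVKS a b A B v‖ := hlb v hlam0 a2 a3 a4 a5 a6
  set s : ℝ := sOneKS v with hs
  have hsnn : 0 ≤ s := sOneKS_nonneg v
  -- error terms
  set el : Fin q → ((Fin n → ℝ) →L[ℝ] ℝ) := fun l =>
    xi l • (H l x • fderiv ℝ (G l) x + G l x • fderiv ℝ (H l) x)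
    - (mu l • fderiv ℝ (G l) x + nu l • fderiv ℝ (H l) x) with hel
  have hmu_le_s : ∀ l, mu l ≤ s := by
    intro l
    have := abs_mu_le_sOneKS v l
    rw [abs_of_nonneg (a3 l)] at this
    exact this
  have hnu_le_s : ∀ l, nu l ≤ s := by
    intro l
    have := abs_nu_le_sOneKS v l
    rw [abs_of_nonneg (a5 l)] at this
    exact this
  have helbd : ∀ l, ‖el l‖ ≤ εq * s := by
    intro l
    rcases eq_or_ne (xi l) 0 with hz | hz
    · have hmuz : mu l = 0 := by
        simp only [hmu]; split <;> simp [hz]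
      have hnuz : nu l = 0 := by
        simp only [hnu]; split <;> simp [hz]
      simp only [hel]
      simp only [hz, hmuz, hnuz, zero_smul, zero_add, add_zero, sub_zero, norm_zero]
      exact mul_nonneg hεq.le hsnn
    · obtain ⟨hGx, hHx⟩ := hact l hz
      obtain ⟨hGb0, hHb0⟩ := hactb l hz
      have hxipos : 0 < xi l := lt_of_le_of_ne (hxi0 l) (Ne.symm hz)
      by_cases hSG : G l xb = 0 ∧ 0 ≤ H l xb <;> by_cases hSH : H l xb = 0 ∧ 0 ≤ G l xb
      · -- biactive: exact representation, zero error
        have : el l = 0 := by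
          simp only [hel, hmu, hnu]
          rw [if_pos hSG, if_pos hSH]
          simp only [smul_add, smul_smul]
          abel
        rw [this, norm_zero]
        exact mul_nonneg hεq.le hsnn
      · -- I^{0+}
        have hHbpos : 0 < H l xb := by
          rcases lt_or_eq_of_le hHb0 with h' | h'
          · exact h'
          · exact absurd ⟨h'.symm, hGb0⟩ hSH
        obtain ⟨hHhalf, hGsmall⟩ := hU8 l ⟨hSG.1, hHbpos⟩
        have heleq : el l = (xi l * G l x) • fderiv ℝ (H l) x := by
          simp only [hel, hmu, hnu]
          rw [if_pos hSG, if_neg hSH]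
          simp only [smul_add, smul_smul, zero_smul, add_zero]
          abel
        rw [heleq, norm_smul (xi l * G l x) (fderiv ℝ (H l) x), Real.norm_eq_abs, abs_mul,
          abs_of_nonneg hxipos.le, abs_of_nonneg hGx.le]
        have hBx : ‖fderiv ℝ (H l) x‖ ≤ ‖B l‖ + ε := by
          have h1 := norm_sub_norm_le (fderiv ℝ (H l) x) (B l)
          have h2 := (hU7 l).le
          linarith only [h1, h2]
        have hBpos : (0:ℝ) < ‖B l‖ + ε + 1 := by linarith only [hε, norm_nonneg (B l)]
        have hδval : δG l * (‖B l‖ + ε + 1) = εq * H l xb / 2 := by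
          rw [hδG]
          field_simp
        have hmul : mu l = xi l * H l x := by simp only [hmu]; rw [if_pos hSG]
        have hmus : xi l * H l x ≤ s := by rw [← hmul]; exact hmu_le_s l
        have hGδ : G l x ≤ δG l := le_of_lt (lt_of_le_of_lt (le_abs_self _) hGsmall)
        -- chain of bounds
        have step1 : xi l * G l x * ‖fderiv ℝ (H l) x‖ ≤ xi l * δG l * (‖B l‖ + ε + 1) := by
          have hn : (0:ℝ) ≤ ‖fderiv ℝ (H l) x‖ := norm_nonneg _
          have hδ0 : 0 ≤ δG l := le_trans hGx.le hGδ
          have k1 : G l x * ‖fderiv ℝ (H l) x‖ ≤ δG l * (‖B l‖ + ε) :=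
            mul_le_mul hGδ hBx hn hδ0
          have k2 : δG l * (‖B l‖ + ε) ≤ δG l * (‖B l‖ + ε + 1) :=
            mul_le_mul_of_nonneg_left (by linarith only []) hδ0
          rw [mul_assoc, mul_assoc]
          exact mul_le_mul_of_nonneg_left (k1.trans k2) hxipos.le
        have step2 : xi l * δG l * (‖B l‖ + ε + 1) = xi l * (εq * H l xb / 2) := by
          rw [mul_assoc, hδval]
        have step3 : xi l * (εq * H l xb / 2) ≤ εq * (xi l * H l x) := by
          have k3 : xi l * (H l xb / 2) ≤ xi l * H l x :=
            mul_le_mul_of_nonneg_left hHhalf.le hxipos.le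
          calc xi l * (εq * H l xb / 2) = εq * (xi l * (H l xb / 2)) := by ring
            _ ≤ εq * (xi l * H l x) := mul_le_mul_of_nonneg_left k3 hεq.le
        have step4 : εq * (xi l * H l x) ≤ εq * s := by
          exact mul_le_mul_of_nonneg_left hmus hεq.le
        linarith only [step1, step2, step3, step4]
      · -- I^{+0}
        have hGbpos : 0 < G l xb := by
          rcases lt_or_eq_of_le hGb0 with h' | h'
          · exact h'
          · exact absurd ⟨h'.symm, hHb0⟩ hSG
        obtain ⟨hGhalf, hHsmall⟩ := hU9 l ⟨hSH.1, hGbpos⟩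
        have heleq : el l = (xi l * H l x) • fderiv ℝ (G l) x := by
          simp only [hel, hmu, hnu]
          rw [if_neg hSG, if_pos hSH]
          simp only [smul_add, smul_smul, zero_smul, zero_add]
          abel
        rw [heleq, norm_smul (xi l * H l x) (fderiv ℝ (G l) x), Real.norm_eq_abs, abs_mul,
          abs_of_nonneg hxipos.le, abs_of_nonneg hHx.le]
        have hAx : ‖fderiv ℝ (G l) x‖ ≤ ‖A l‖ + ε := by
          have h1 := norm_sub_norm_le (fderiv ℝ (G l) x) (A l)
          have h2 := (hU6 l).le
          linarith only [h1, h2]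
        have hApos : (0:ℝ) < ‖A l‖ + ε + 1 := by linarith only [hε, norm_nonneg (A l)]
        have hδval : δH l * (‖A l‖ + ε + 1) = εq * G l xb / 2 := by
          rw [hδH]
          field_simp
        have hnul : nu l = xi l * G l x := by simp only [hnu]; rw [if_pos hSH]
        have hnus : xi l * G l x ≤ s := by rw [← hnul]; exact hnu_le_s l
        have hHδ : H l x ≤ δH l := le_of_lt (lt_of_le_of_lt (le_abs_self _) hHsmall)
        have step1 : xi l * H l x * ‖fderiv ℝ (G l) x‖ ≤ xi l * δH l * (‖A l‖ + ε + 1) := by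
          have hn : (0:ℝ) ≤ ‖fderiv ℝ (G l) x‖ := norm_nonneg _
          have hδ0 : 0 ≤ δH l := le_trans hHx.le hHδ
          have k1 : H l x * ‖fderiv ℝ (G l) x‖ ≤ δH l * (‖A l‖ + ε) :=
            mul_le_mul hHδ hAx hn hδ0
          have k2 : δH l * (‖A l‖ + ε) ≤ δH l * (‖A l‖ + ε + 1) :=
            mul_le_mul_of_nonneg_left (by linarith only []) hδ0
          rw [mul_assoc, mul_assoc]
          exact mul_le_mul_of_nonneg_left (k1.trans k2) hxipos.le
        have step2 : xi l * δH l * (‖A l‖ + ε + 1) = xi l * (εq * G l xb / 2) := by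
          rw [mul_assoc, hδval]
        have step3 : xi l * (εq * G l xb / 2) ≤ εq * (xi l * G l x) := by
          have k3 : xi l * (G l xb / 2) ≤ xi l * G l x :=
            mul_le_mul_of_nonneg_left hGhalf.le hxipos.le
          calc xi l * (εq * G l xb / 2) = εq * (xi l * (G l xb / 2)) := by ring
            _ ≤ εq * (xi l * G l x) := mul_le_mul_of_nonneg_left k3 hεq.le
        have step4 : εq * (xi l * G l x) ≤ εq * s :=
          mul_le_mul_of_nonneg_left hnus hεq.le
        linarith only [step1, step2, step3, step4]
      · -- impossible: both inactive at xb but active at x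
        exfalso
        rcases hGHxb l with h' | h'
        · exact hSG ⟨le_antisymm h' hGb0, hHb0⟩
        · exact hSH ⟨le_antisymm h' hHb0, hGb0⟩
  -- Tx and its bound
  set Tx : (Fin n → ℝ) →L[ℝ] ℝ := (∑ i, lam i • fderiv ℝ (g i) x)
      + (∑ j, rho j • fderiv ℝ (h j) x) + (∑ l, mu l • fderiv ℝ (G l) x)
      + (∑ l, nu l • fderiv ℝ (H l) x) with hTx
  have hTxel : Tx + (∑ l, el l) = 0 := by
    have hsplit : (∑ l, el l) =
        (∑ l, xi l • (H l x • fderiv ℝ (G l) x + G l x • fderiv ℝ (H l) x))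
        - ((∑ l, mu l • fderiv ℝ (G l) x) + (∑ l, nu l • fderiv ℝ (H l) x)) := by
      simp only [hel, Finset.sum_sub_distrib, Finset.sum_add_distrib]
    rw [hTx, hsplit, ← heq]
    abel
  have hεqle : (q : ℝ) * εq ≤ c / 4 := by
    have h1 : ((q : ℝ) + 1) * εq = c / 4 := by
      rw [hεqdef]
      field_simp
    linarith only [h1, hεq.le]
  have hTxbd : ‖Tx‖ ≤ c / 4 * s := by
    have h1 : Tx = -(∑ l, el l) := eq_neg_of_add_eq_zero_left hTxel
    rw [h1, norm_neg]
    have h2 : ‖∑ l, el l‖ ≤ ∑ l : Fin q, εq * s :=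
      le_trans (norm_sum_le _ _) (Finset.sum_le_sum fun l _ => helbd l)
    have h3 : (∑ _l : Fin q, εq * s) = (q : ℝ) * (εq * s) := by
      rw [Finset.sum_const, Finset.card_univ, Fintype.card_fin, nsmul_eq_mul]
    rw [h3] at h2
    nlinarith only [h2, hεqle, hsnn]
  -- the perturbation bound
  have hDx : combVKS a b A B v - Tx =
      (∑ i, lam i • (a i - fderiv ℝ (g i) x)) + (∑ j, rho j • (b j - fderiv ℝ (h j) x))
      + (∑ l, mu l • (A l - fderiv ℝ (G l) x)) + (∑ l, nu l • (B l - fderiv ℝ (H l) x)) := by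
    rw [hTx]
    simp only [combVKS, hv, smul_sub, Finset.sum_sub_distrib]
    abel
  have hgrp1 : ‖∑ i, lam i • (a i - fderiv ℝ (g i) x)‖ ≤ (∑ i, |lam i|) * ε := by
    refine le_trans (norm_sum_le _ _) ?_
    rw [Finset.sum_mul]
    refine Finset.sum_le_sum fun i _ => ?_
    rw [norm_smul (lam i) (a i - fderiv ℝ (g i) x), Real.norm_eq_abs]
    have hni : ‖a i - fderiv ℝ (g i) x‖ < ε := by rw [norm_sub_rev]; exact hU4 i
    exact mul_le_mul_of_nonneg_left hni.le (abs_nonneg _)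
  have hgrp2 : ‖∑ j, rho j • (b j - fderiv ℝ (h j) x)‖ ≤ (∑ j, |rho j|) * ε := by
    refine le_trans (norm_sum_le _ _) ?_
    rw [Finset.sum_mul]
    refine Finset.sum_le_sum fun j _ => ?_
    rw [norm_smul (rho j) (b j - fderiv ℝ (h j) x), Real.norm_eq_abs]
    have hnj : ‖b j - fderiv ℝ (h j) x‖ < ε := by rw [norm_sub_rev]; exact hU5 j
    exact mul_le_mul_of_nonneg_left hnj.le (abs_nonneg _)
  have hgrp3 : ‖∑ l, mu l • (A l - fderiv ℝ (G l) x)‖ ≤ (∑ l, |mu l|) * ε := by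
    refine le_trans (norm_sum_le _ _) ?_
    rw [Finset.sum_mul]
    refine Finset.sum_le_sum fun l _ => ?_
    rw [norm_smul (mu l) (A l - fderiv ℝ (G l) x), Real.norm_eq_abs]
    have hnl : ‖A l - fderiv ℝ (G l) x‖ < ε := by rw [norm_sub_rev]; exact hU6 l
    exact mul_le_mul_of_nonneg_left hnl.le (abs_nonneg _)
  have hgrp4 : ‖∑ l, nu l • (B l - fderiv ℝ (H l) x)‖ ≤ (∑ l, |nu l|) * ε := by
    refine le_trans (norm_sum_le _ _) ?_
    rw [Finset.sum_mul]
    refine Finset.sum_le_sum fun l _ => ?_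
    rw [norm_smul (nu l) (B l - fderiv ℝ (H l) x), Real.norm_eq_abs]
    have hnl : ‖B l - fderiv ℝ (H l) x‖ < ε := by rw [norm_sub_rev]; exact hU7 l
    exact mul_le_mul_of_nonneg_left hnl.le (abs_nonneg _)
  have hsum_eq : s = (∑ i, |lam i|) + (∑ j, |rho j|) + (∑ l, |mu l|) + (∑ l, |nu l|) := by
    rw [hs, hv]
    rfl
  have hDbd : ‖combVKS a b A B v - Tx‖ ≤ ε * s := by
    rw [hDx]
    have n1 := norm_add_le ((∑ i, lam i • (a i - fderiv ℝ (g i) x))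
      + (∑ j, rho j • (b j - fderiv ℝ (h j) x)) + (∑ l, mu l • (A l - fderiv ℝ (G l) x)))
      (∑ l, nu l • (B l - fderiv ℝ (H l) x))
    have n2 := norm_add_le ((∑ i, lam i • (a i - fderiv ℝ (g i) x))
      + (∑ j, rho j • (b j - fderiv ℝ (h j) x))) (∑ l, mu l • (A l - fderiv ℝ (G l) x))
    have n3 := norm_add_le (∑ i, lam i • (a i - fderiv ℝ (g i) x))
      (∑ j, rho j • (b j - fderiv ℝ (h j) x))
    have htot : (∑ i, |lam i|) * ε + (∑ j, |rho j|) * ε + (∑ l, |mu l|) * ε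
        + (∑ l, |nu l|) * ε = ε * s := by
      rw [hsum_eq]; ring
    linarith only [n1, n2, n3, hgrp1, hgrp2, hgrp3, hgrp4, htot]
  have hup : ‖combVKS a b A B v‖ ≤ c / 2 * s := by
    have h2 := norm_add_le Tx (combVKS a b A B v - Tx)
    have h3 : Tx + (combVKS a b A B v - Tx) = combVKS a b A B v := by abel
    rw [h3] at h2
    have h4 : ε * s = c / 4 * s := by rw [hεdef]
    linarith only [h2, hTxbd, hDbd, h4]
  have hs0 : s = 0 := by
    have hle : s ≤ 0 := by nlinarith only [hlow, hup, hc]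
    linarith only [hle, hsnn]
  refine ⟨fun i => ?_, fun j => ?_, fun l => ?_⟩
  · have hle := abs_fst_le_sOneKS v i
    rw [← hs, hs0] at hle
    exact abs_eq_zero.1 (le_antisymm hle (abs_nonneg _))
  · have hle := abs_snd_le_sOneKS v j
    rw [← hs, hs0] at hle
    exact abs_eq_zero.1 (le_antisymm hle (abs_nonneg _))
  · by_contra hne
    obtain ⟨hGx, hHx⟩ := hact l hne
    obtain ⟨hGb0, hHb0⟩ := hactb l hne
    rcases hGHxb l with h' | h'
    · have hSG : G l xb = 0 ∧ 0 ≤ H l xb := ⟨le_antisymm h' hGb0, hHb0⟩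
      have hmul : mu l = xi l * H l x := by simp only [hmu]; rw [if_pos hSG]
      have hle := abs_mu_le_sOneKS v l
      rw [← hs, hs0] at hle
      have hmuz : mu l = 0 := abs_eq_zero.1 (le_antisymm hle (abs_nonneg _))
      rw [hmul] at hmuz
      exact hne ((mul_eq_zero.1 hmuz).resolve_right (ne_of_gt hHx))
    · have hSH : H l xb = 0 ∧ 0 ≤ G l xb := ⟨le_antisymm h' hHb0, hGb0⟩
      have hnul : nu l = xi l * G l x := by simp only [hnu]; rw [if_pos hSH]
      have hle := abs_nu_le_sOneKS v l
      rw [← hs, hs0] at hle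
      have hnuz : nu l = 0 := abs_eq_zero.1 (le_antisymm hle (abs_nonneg _))
      rw [hnul] at hnuz
      exact hne ((mul_eq_zero.1 hnuz).resolve_right (ne_of_gt hGx))
end
end
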